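/- arXiv:1905.06797 — 9 statements merged into one kernel-verified Lean document; each statement's English description precedes it below -/
import Mathlib

section
/- If φ₁ and φ₂ are both models of a locally Lipschitz function f : ℝⁿ → ℝ, then φ = max{φ₁, φ₂} is again a model of f. -/
open Filter Topology Metric

noncomputable def clarkeD {n : ℕ} (f : EuclideanSpace ℝ (Fin n) → ℝ)
    (x d : EuclideanSpace ℝ (Fin n)) : ℝ :=
  Filter.limsup (fun p : EuclideanSpace ℝ (Fin n) × ℝ => (f (p.1 + p.2 • d) - f p.1) / p.2)
    ((𝓝 x) ×ˢ (𝓝[>] (0 : ℝ)))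

def clarkeSubdiff {n : ℕ} (f : EuclideanSpace ℝ (Fin n) → ℝ) (x : EuclideanSpace ℝ (Fin n)) :
    Set (EuclideanSpace ℝ (Fin n)) :=
  {g | ∀ d, (inner ℝ g d : ℝ) ≤ clarkeD f x d}

def convexSubdiff {n : ℕ} (φ : EuclideanSpace ℝ (Fin n) → ℝ) (x : EuclideanSpace ℝ (Fin n)) :
    Set (EuclideanSpace ℝ (Fin n)) :=
  {g | ∀ y, φ x + (inner ℝ g (y - x) : ℝ) ≤ φ y}

/-- `φ` is a model of `f` in the sense of axioms (M₁), (M₂), (M₃). -/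
def IsModel {n : ℕ} (f : EuclideanSpace ℝ (Fin n) → ℝ)
    (φ : EuclideanSpace ℝ (Fin n) → EuclideanSpace ℝ (Fin n) → ℝ) : Prop :=
  (∀ x, ConvexOn ℝ Set.univ (fun y => φ y x)) ∧
  (∀ x, φ x x = f x) ∧
  (∀ x, convexSubdiff (fun y => φ y x) x ⊆ clarkeSubdiff f x) ∧
  (∀ (x : EuclideanSpace ℝ (Fin n)) (y : ℕ → EuclideanSpace ℝ (Fin n)),
    Filter.Tendsto y Filter.atTop (𝓝 x) →
    ∃ ε : ℕ → ℝ, (∀ k, 0 ≤ ε k) ∧ Filter.Tendsto ε Filter.atTop (𝓝 0) ∧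
      ∀ k, f (y k) ≤ φ (y k) x + ε k * ‖y k - x‖) ∧
  (∀ (x y : EuclideanSpace ℝ (Fin n)) (xk yk : ℕ → EuclideanSpace ℝ (Fin n)),
    Filter.Tendsto xk Filter.atTop (𝓝 x) → Filter.Tendsto yk Filter.atTop (𝓝 y) →
    Filter.limsup (fun k => φ (yk k) (xk k)) Filter.atTop ≤ φ y x)


open Pointwise


section Aux

variable {n : ℕ}

local notation "E" => EuclideanSpace ℝ (Fin n)

noncomputable def dirQ (ψ : E → ℝ) (x d : E) (t : ℝ) : ℝ := (ψ (x + t • d) - ψ x) / t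

noncomputable def dirInf (ψ : E → ℝ) (x d : E) : ℝ := sInf (dirQ ψ x d '' Set.Ioi 0)

lemma dirQ_lower {ψ : E → ℝ} (hψ : ConvexOn ℝ Set.univ ψ) (x d : E) {t : ℝ} (ht : 0 < t) :
    ψ x - ψ (x - d) ≤ dirQ ψ x d t := by
  have h1 : (0:ℝ) < t + 1 := by linarith
  have h := hψ.2 (Set.mem_univ (x - d)) (Set.mem_univ (x + t • d))
    (le_of_lt (by positivity) : (0:ℝ) ≤ t / (t + 1)) (le_of_lt (by positivity) : (0:ℝ) ≤ 1 / (t + 1))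
    (by field_simp)
  have hveq : (t / (t + 1)) • (x - d) + (1 / (t + 1)) • (x + t • d) = x := by
    match_scalars <;> field_simp <;> ring
  rw [hveq] at h
  simp only [smul_eq_mul] at h
  rw [dirQ, le_div_iff₀ ht]
  have h' := mul_le_mul_of_nonneg_left h (le_of_lt h1)
  have hexp : (t+1) * (t / (t + 1) * ψ (x - d) + 1 / (t + 1) * ψ (x + t • d))
      = t * ψ (x - d) + ψ (x + t • d) := by field_simp
  rw [hexp] at h'
  nlinarith

lemma dirQ_mono {ψ : E → ℝ} (hψ : ConvexOn ℝ Set.univ ψ) (x d : E) {s t : ℝ}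
    (hs : 0 < s) (hst : s ≤ t) : dirQ ψ x d s ≤ dirQ ψ x d t := by
  have ht : 0 < t := lt_of_lt_of_le hs hst
  have hc1 : (0:ℝ) ≤ 1 - s / t := by
    rw [sub_nonneg]; exact div_le_one_of_le₀ hst (le_of_lt ht)
  have h := hψ.2 (Set.mem_univ x) (Set.mem_univ (x + t • d)) hc1
    (le_of_lt (by positivity) : (0:ℝ) ≤ s / t) (by ring)
  have hveq : (1 - s / t) • x + (s / t) • (x + t • d) = x + s • d := by
    match_scalars <;> field_simp <;> ring
  rw [hveq] at h
  simp only [smul_eq_mul] at h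
  rw [dirQ, dirQ, div_le_div_iff₀ hs ht]
  have h' := mul_le_mul_of_nonneg_left h (le_of_lt ht)
  have hexp : t * ((1 - s / t) * ψ x + s / t * ψ (x + t • d))
      = (t - s) * ψ x + s * ψ (x + t • d) := by field_simp
  rw [hexp] at h'
  nlinarith

lemma dirQ_img_nonempty (ψ : E → ℝ) (x d : E) : (dirQ ψ x d '' Set.Ioi 0).Nonempty :=
  ⟨dirQ ψ x d 1, Set.mem_image_of_mem _ (Set.mem_Ioi.2 one_pos)⟩

lemma dirQ_img_bddBelow {ψ : E → ℝ} (hψ : ConvexOn ℝ Set.univ ψ) (x d : E) :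
    BddBelow (dirQ ψ x d '' Set.Ioi 0) := by
  refine ⟨ψ x - ψ (x - d), ?_⟩
  rintro r ⟨t, ht, rfl⟩
  exact dirQ_lower hψ x d (Set.mem_Ioi.1 ht)

lemma dirInf_le_dirQ {ψ : E → ℝ} (hψ : ConvexOn ℝ Set.univ ψ) (x d : E) {t : ℝ} (ht : 0 < t) :
    dirInf ψ x d ≤ dirQ ψ x d t :=
  csInf_le (dirQ_img_bddBelow hψ x d) (Set.mem_image_of_mem _ (Set.mem_Ioi.2 ht))

lemma dirQ_smul (ψ : E → ℝ) (x d : E) {c : ℝ} (hc : c ≠ 0) (t : ℝ) :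
    dirQ ψ x (c • d) t = c * dirQ ψ x d (t * c) := by
  rw [dirQ, dirQ, smul_smul]
  rcases eq_or_ne t 0 with rfl | ht
  · simp
  · field_simp

lemma dirInf_smul (ψ : E → ℝ) (x d : E) {c : ℝ} (hc : 0 < c) :
    dirInf ψ x (c • d) = c * dirInf ψ x d := by
  have himg : dirQ ψ x (c • d) '' Set.Ioi 0 = c • (dirQ ψ x d '' Set.Ioi 0) := by
    ext r
    constructor
    · rintro ⟨t, ht, rfl⟩
      refine ⟨dirQ ψ x d (t * c), Set.mem_image_of_mem _
        (Set.mem_Ioi.2 (mul_pos (Set.mem_Ioi.1 ht) hc)), ?_⟩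
      simp only [smul_eq_mul]
      rw [← dirQ_smul ψ x d (ne_of_gt hc)]
    · rintro ⟨u, ⟨t, ht, rfl⟩, rfl⟩
      refine ⟨t / c, Set.mem_Ioi.2 (div_pos (Set.mem_Ioi.1 ht) hc), ?_⟩
      simp only [smul_eq_mul]
      rw [dirQ_smul ψ x d (ne_of_gt hc), div_mul_cancel₀ _ (ne_of_gt hc)]
  rw [dirInf, dirInf, himg, Real.sInf_smul_of_nonneg (le_of_lt hc), smul_eq_mul]

lemma dirInf_zero (ψ : E → ℝ) (x : E) : dirInf ψ x 0 = 0 := by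
  have : dirQ ψ x 0 '' Set.Ioi 0 = {0} := by
    ext r
    constructor
    · rintro ⟨t, _, rfl⟩; simp [dirQ]
    · rintro rfl; exact ⟨1, Set.mem_Ioi.2 one_pos, by simp [dirQ]⟩
  rw [dirInf, this, csInf_singleton]

lemma dirQ_add {ψ : E → ℝ} (hψ : ConvexOn ℝ Set.univ ψ) (x d e : E) {t : ℝ} (ht : 0 < t) :
    dirQ ψ x (d + e) t ≤ dirQ ψ x d (2 * t) + dirQ ψ x e (2 * t) := by
  have h := hψ.2 (Set.mem_univ (x + (2*t) • d)) (Set.mem_univ (x + (2*t) • e))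
    (by norm_num : (0:ℝ) ≤ 1/2) (by norm_num : (0:ℝ) ≤ 1/2) (by norm_num)
  have hveq : (1/2 : ℝ) • (x + (2*t) • d) + (1/2 : ℝ) • (x + (2*t) • e) = x + t • (d + e) := by
    match_scalars <;> ring
  rw [hveq] at h
  rw [dirQ, dirQ, dirQ, div_add_div _ _ (by positivity : (2*t:ℝ) ≠ 0) (by positivity : (2*t:ℝ) ≠ 0),
    div_le_div_iff₀ ht (by positivity)]
  simp only [smul_eq_mul] at h
  nlinarith [mul_le_mul_of_nonneg_right h (by positivity : (0:ℝ) ≤ 4*t*t)]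

lemma dirInf_add {ψ : E → ℝ} (hψ : ConvexOn ℝ Set.univ ψ) (x d e : E) :
    dirInf ψ x (d + e) ≤ dirInf ψ x d + dirInf ψ x e := by
  refine le_of_forall_pos_le_add fun ε hε => ?_
  obtain ⟨a, ⟨t₁, ht₁, rfl⟩, ha⟩ :=
    Real.lt_sInf_add_pos (dirQ_img_nonempty ψ x d) (half_pos hε)
  obtain ⟨b, ⟨t₂, ht₂, rfl⟩, hb⟩ :=
    Real.lt_sInf_add_pos (dirQ_img_nonempty ψ x e) (half_pos hε)
  rw [Set.mem_Ioi] at ht₁ ht₂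
  set t := min t₁ t₂ with htdef
  have ht : 0 < t := lt_min ht₁ ht₂
  have h1 : dirInf ψ x (d + e) ≤ dirQ ψ x (d + e) (t/2) := dirInf_le_dirQ hψ x _ (by positivity)
  have h2 := dirQ_add hψ x d e (by positivity : (0:ℝ) < t/2)
  have h2t : 2 * (t/2) = t := by ring
  rw [h2t] at h2
  have h3 : dirQ ψ x d t ≤ dirQ ψ x d t₁ := dirQ_mono hψ x d ht (min_le_left _ _)
  have h4 : dirQ ψ x e t ≤ dirQ ψ x e t₂ := dirQ_mono hψ x e ht (min_le_right _ _)
  simp only [dirInf] at ha hb h1 ⊢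
  linarith

end Aux

section Main

variable {n : ℕ}

local notation "E" => EuclideanSpace ℝ (Fin n)

lemma exists_subgrad {ψ : E → ℝ} (hψ : ConvexOn ℝ Set.univ ψ) (x d : E) :
    ∃ g ∈ convexSubdiff ψ x, dirInf ψ x d ≤ (inner ℝ g d : ℝ) := by
  set N : E → ℝ := dirInf ψ x with hN
  have hNhom : ∀ c : ℝ, 0 < c → ∀ v, N (c • v) = c * N v := fun c hc v => dirInf_smul ψ x v hc
  have hNadd : ∀ v w, N (v + w) ≤ N v + N w := fun v w => dirInf_add hψ x v w
  have hNzero : N 0 = 0 := dirInf_zero ψ x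
  have hN1 : ∀ v : E, N v ≤ ψ (x + v) - ψ x := by
    intro v
    have := dirInf_le_dirQ hψ x (d := v) one_pos
    simpa [dirQ] using this
  set L : E →ₗ[ℝ] ℝ := (N d / (inner ℝ d d : ℝ)) • ((innerSL ℝ d : E →L[ℝ] ℝ) : E →ₗ[ℝ] ℝ) with hL
  have hLa : ∀ a : ℝ, L (a • d) = (N d / (inner ℝ d d : ℝ)) * (a * (inner ℝ d d : ℝ)) := by
    intro a
    simp [hL, innerSL_apply_apply, real_inner_smul_right]
    ring
  have hLd0 : d ≠ 0 → L d = N d := by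
    intro hd
    have hdd : (inner ℝ d d : ℝ) ≠ 0 := by
      simpa using fun h => hd ((@inner_self_eq_zero ℝ _ _ _ _ d).1 h)
    have h1 := hLa 1
    rw [one_smul] at h1
    rw [h1, one_mul, div_mul_cancel₀ _ hdd]
  have hLsub : ∀ v ∈ Submodule.span ℝ ({d} : Set E), L v ≤ N v := by
    intro v hv
    obtain ⟨a, rfl⟩ := Submodule.mem_span_singleton.1 hv
    by_cases hd : d = 0
    · subst hd
      rw [smul_zero, hNzero, show L 0 = 0 from map_zero L]
    · have hdd : (inner ℝ d d : ℝ) ≠ 0 := by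
        simpa using fun h => hd ((@inner_self_eq_zero ℝ _ _ _ _ d).1 h)
      have hLa' : L (a • d) = a * N d := by
        rw [hLa a, show (N d / (inner ℝ d d:ℝ)) * (a * (inner ℝ d d:ℝ))
          = a * ((N d / (inner ℝ d d:ℝ)) * (inner ℝ d d:ℝ)) from by ring,
          div_mul_cancel₀ _ hdd]
      rw [hLa']
      rcases lt_trichotomy a 0 with hlt | rfl | hgt
      · have h0 : (0:ℝ) ≤ N d + N (-d) := by
          have h := hNadd d (-d)
          rw [add_neg_cancel, hNzero] at h
          linarith
        have hrw : N (a • d) = (-a) * N (-d) := by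
          have h1 : a • d = (-a) • (-d) := by simp
          rw [h1, hNhom (-a) (by linarith) (-d)]
        rw [hrw]
        nlinarith
      · rw [zero_smul, hNzero, zero_mul]
      · rw [hNhom a hgt d]
  obtain ⟨ℓ, hext, hle⟩ := exists_extension_of_le_sublinear
    (L.toPMap (Submodule.span ℝ ({d} : Set E))) N hNhom hNadd
    (fun v => by exact hLsub v.1 v.2)
  set g₁ : E := (InnerProductSpace.toDual ℝ (EuclideanSpace ℝ (Fin n))).symm
    (LinearMap.toContinuousLinearMap ℓ) with hg₁def
  have hg₁ : ∀ v : E, (inner ℝ g₁ v : ℝ) = ℓ v := by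
    intro v
    rw [hg₁def, InnerProductSpace.toDual_symm_apply]
    simp
  refine ⟨g₁, fun y => ?_, ?_⟩
  · have h1 : ℓ (y - x) ≤ N (y - x) := hle _
    have h2 : N (y - x) ≤ ψ (x + (y - x)) - ψ x := hN1 _
    have h3 : x + (y - x) = y := by abel
    rw [h3] at h2
    rw [hg₁ (y - x)]
    linarith
  · have hdmem : d ∈ Submodule.span ℝ ({d} : Set E) := Submodule.mem_span_singleton_self d
    have hd' : ℓ d = L d := by
      have := hext ⟨d, hdmem⟩
      exact this
    rw [hg₁ d, hd']
    by_cases hd : d = 0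
    · subst hd
      rw [map_zero, hNzero]
    · rw [hLd0 hd]

lemma subgrad_max_le {ψ₁ ψ₂ : E → ℝ} (hψ₁ : ConvexOn ℝ Set.univ ψ₁)
    (hψ₂ : ConvexOn ℝ Set.univ ψ₂) {x : E} (hx : ψ₁ x = ψ₂ x) {g : E}
    (hg : g ∈ convexSubdiff (fun y => max (ψ₁ y) (ψ₂ y)) x) (d : E) :
    (inner ℝ g d : ℝ) ≤ max (dirInf ψ₁ x d) (dirInf ψ₂ x d) := by
  by_contra hlt
  push_neg at hlt
  obtain ⟨a, ⟨t₁, ht₁, rfl⟩, hq₁⟩ := exists_lt_of_csInf_lt (dirQ_img_nonempty ψ₁ x d)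
    (lt_of_le_of_lt (le_max_left _ _) hlt)
  obtain ⟨b, ⟨t₂, ht₂, rfl⟩, hq₂⟩ := exists_lt_of_csInf_lt (dirQ_img_nonempty ψ₂ x d)
    (lt_of_le_of_lt (le_max_right _ _) hlt)
  rw [Set.mem_Ioi] at ht₁ ht₂
  set t := min t₁ t₂ with htdef
  have ht : 0 < t := lt_min ht₁ ht₂
  have h := hg (x + t • d)
  simp only [] at h
  rw [add_sub_cancel_left, real_inner_smul_right] at h
  have hmax : max (ψ₁ x) (ψ₂ x) = ψ₁ x := by rw [hx, max_self]
  rw [hmax] at h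
  rcases max_cases (ψ₁ (x + t • d)) (ψ₂ (x + t • d)) with ⟨heq, _⟩ | ⟨heq, _⟩
  · rw [heq] at h
    have hq : (inner ℝ g d : ℝ) ≤ dirQ ψ₁ x d t := by
      rw [dirQ, le_div_iff₀ ht]; linarith
    have hmono := dirQ_mono hψ₁ x d ht (min_le_left t₁ t₂)
    linarith
  · rw [heq, hx] at h
    have hq : (inner ℝ g d : ℝ) ≤ dirQ ψ₂ x d t := by
      rw [dirQ, le_div_iff₀ ht]; linarith
    have hmono := dirQ_mono hψ₂ x d ht (min_le_right t₁ t₂)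
    linarith

lemma limsup_max_le (u v : ℕ → ℝ) :
    Filter.limsup (fun k => max (u k) (v k)) Filter.atTop ≤
      max (Filter.limsup u Filter.atTop) (Filter.limsup v Filter.atTop) := by
  set Su := {a : ℝ | ∀ᶠ k in Filter.atTop, u k ≤ a} with hSu
  set Sv := {a : ℝ | ∀ᶠ k in Filter.atTop, v k ≤ a} with hSv
  have hSm : {a : ℝ | ∀ᶠ k in Filter.atTop, max (u k) (v k) ≤ a} = Su ∩ Sv := by
    ext a
    simp only [hSu, hSv, Set.mem_inter_iff, Set.mem_setOf_eq, max_le_iff, eventually_and]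
  rw [Filter.limsup_eq, Filter.limsup_eq, Filter.limsup_eq, hSm, ← hSu, ← hSv]
  have hup : ∀ (w : ℕ → ℝ) (a b : ℝ), a ≤ b → (∀ᶠ k in Filter.atTop, w k ≤ a) →
      (∀ᶠ k in Filter.atTop, w k ≤ b) := fun w a b hab h => h.mono fun k hk => le_trans hk hab
  by_cases hu : Su.Nonempty
  · by_cases hv : Sv.Nonempty
    · by_cases hb : BddBelow (Su ∩ Sv)
      · refine le_of_forall_pos_le_add fun ε hε => ?_
        obtain ⟨a, haS, ha⟩ := Real.lt_sInf_add_pos hu hε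
        obtain ⟨b, hbS, hb'⟩ := Real.lt_sInf_add_pos hv hε
        have hmem : max a b ∈ Su ∩ Sv :=
          ⟨hup u a (max a b) (le_max_left _ _) haS, hup v b (max a b) (le_max_right _ _) hbS⟩
        calc sInf (Su ∩ Sv) ≤ max a b := csInf_le hb hmem
          _ ≤ max (sInf Su + ε) (sInf Sv + ε) := max_le_max ha.le hb'.le
          _ = max (sInf Su) (sInf Sv) + ε := max_add_add_right _ _ _
      · have h1 : ¬BddBelow Su := fun h => hb (h.mono Set.inter_subset_left)
        rw [Real.sInf_of_not_bddBelow hb, Real.sInf_of_not_bddBelow h1]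
        exact le_max_left 0 _
    · have hve : Sv = ∅ := Set.not_nonempty_iff_eq_empty.1 hv
      rw [hve, Set.inter_empty]
      exact le_max_right (sInf Su) (sInf (∅ : Set ℝ))
  · have hue : Su = ∅ := Set.not_nonempty_iff_eq_empty.1 hu
    rw [hue, Set.empty_inter]
    exact le_max_left (sInf (∅ : Set ℝ)) (sInf Sv)

end Main

theorem stmt2 {n : ℕ} (f : EuclideanSpace ℝ (Fin n) → ℝ) (hf : LocallyLipschitz f)
    (φ₁ φ₂ : EuclideanSpace ℝ (Fin n) → EuclideanSpace ℝ (Fin n) → ℝ)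
    (h₁ : IsModel f φ₁) (h₂ : IsModel f φ₂) :
    IsModel f (fun y x => max (φ₁ y x) (φ₂ y x)) := by
  obtain ⟨hc₁, he₁, hs₁, hm₁, hl₁⟩ := h₁
  obtain ⟨hc₂, he₂, hs₂, hm₂, hl₂⟩ := h₂
  refine ⟨fun x => ?_, fun x => ?_, fun x g hg => ?_, fun x y hy => ?_,
    fun x y xk yk hxk hyk => ?_⟩
  · exact (hc₁ x).sup (hc₂ x)
  · simp only [he₁ x, he₂ x, max_self]
  · intro d
    have hxx : φ₁ x x = φ₂ x x := by rw [he₁ x, he₂ x]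
    have key := subgrad_max_le (hc₁ x) (hc₂ x) hxx hg d
    rcases le_total (dirInf (fun y => φ₂ y x) x d) (dirInf (fun y => φ₁ y x) x d) with h | h
    · obtain ⟨g₁, hmem, hgd⟩ := exists_subgrad (hc₁ x) x d
      have hcl := hs₁ x hmem d
      rw [max_eq_left h] at key
      linarith
    · obtain ⟨g₂, hmem, hgd⟩ := exists_subgrad (hc₂ x) x d
      have hcl := hs₂ x hmem d
      rw [max_eq_right h] at key
      linarith
  · obtain ⟨ε₁, hε₁0, hε₁, hb₁⟩ := hm₁ x y hy
    obtain ⟨ε₂, hε₂0, hε₂, hb₂⟩ := hm₂ x y hy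
    refine ⟨fun k => max (ε₁ k) (ε₂ k), fun k => le_trans (hε₁0 k) (le_max_left _ _), ?_, ?_⟩
    · have := hε₁.max hε₂
      rwa [max_self] at this
    · intro k
      refine le_trans (hb₁ k) (add_le_add (le_max_left _ _) ?_)
      exact mul_le_mul_of_nonneg_right (le_max_left _ _) (norm_nonneg _)
  · exact le_trans (limsup_max_le _ _) (max_le_max (hl₁ x y xk yk hxk hyk) (hl₂ x y xk yk hxk hyk))
end

section
/- Let f = ψ ∘ F with ψ : ℝᵐ → ℝ convex and F : ℝⁿ → ℝᵐ continuously differentiable. Then the natural model φ(y,x) = ψ(F(x) + F'(x)(y - x)) is a strict model of f: for all sequences xₖ → x and yₖ → x there exist εₖ → 0⁺ with f(yₖ) ≤ φ(yₖ,xₖ) + εₖ‖yₖ - xₖ‖; moreover φ(·,x) is convex, φ(x,x) = f(x), and ∂₁φ(x,x) ⊆ ∂f(x). -/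
open Filter Topology Metric


lemma locLip_ball {E : Type*} [NormedAddCommGroup E] [NormedSpace ℝ E] {g : E → ℝ}
    (h : LocallyLipschitz g) (x : E) :
    ∃ K : NNReal, ∃ r : ℝ, 0 < r ∧ LipschitzOnWith K g (ball x r) := by
  obtain ⟨K, t, ht, hl⟩ := h x
  obtain ⟨r, hr, hball⟩ := Metric.mem_nhds_iff.1 ht
  exact ⟨K, r, hr, hl.mono hball⟩

lemma key_est {n m : ℕ} {F : EuclideanSpace ℝ (Fin n) → EuclideanSpace ℝ (Fin m)}
    (hF : ContDiff ℝ 1 F) (x : EuclideanSpace ℝ (Fin n))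
    {xk yk : ℕ → EuclideanSpace ℝ (Fin n)}
    (hxk : Tendsto xk atTop (𝓝 x)) (hyk : Tendsto yk atTop (𝓝 x))
    {ε : ℝ} (hε : 0 < ε) :
    ∀ᶠ k in atTop,
      ‖F (yk k) - F (xk k) - fderiv ℝ F (xk k) (yk k - xk k)‖ ≤ ε * ‖yk k - xk k‖ := by
  have hcont : Continuous (fun z => fderiv ℝ F z) := hF.continuous_fderiv one_ne_zero
  obtain ⟨δ, hδ, hδ'⟩ := Metric.continuousAt_iff.1 hcont.continuousAt (ε/2) (by linarith)
  filter_upwards [hxk.eventually_mem (ball_mem_nhds x hδ),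
    hyk.eventually_mem (ball_mem_nhds x hδ)] with k hxb hyb
  set A := fderiv ℝ F (xk k) with hA
  have hder : ∀ z ∈ ball x δ, HasFDerivWithinAt (fun w => F w - A w) (fderiv ℝ F z - A)
      (ball x δ) z := fun z _ =>
    (((hF.differentiable one_ne_zero z).hasFDerivAt).sub (A.hasFDerivAt)).hasFDerivWithinAt
  have hbound : ∀ z ∈ ball x δ, ‖fderiv ℝ F z - A‖ ≤ ε := by
    intro z hz
    have h1 : ‖fderiv ℝ F z - fderiv ℝ F x‖ < ε/2 := by
      have := hδ' (mem_ball.1 hz); rwa [dist_eq_norm] at this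
    have h2 : ‖fderiv ℝ F x - A‖ < ε/2 := by
      have := hδ' (mem_ball.1 hxb); rw [dist_eq_norm] at this
      rw [hA, norm_sub_rev]; exact this
    calc ‖fderiv ℝ F z - A‖ = ‖(fderiv ℝ F z - fderiv ℝ F x) + (fderiv ℝ F x - A)‖ := by abel_nf
      _ ≤ ‖fderiv ℝ F z - fderiv ℝ F x‖ + ‖fderiv ℝ F x - A‖ := norm_add_le _ _
      _ ≤ ε := by linarith
  have := (convex_ball x δ).norm_image_sub_le_of_norm_hasFDerivWithin_le hder hbound hxb hyb
  have he : (fun w => F w - A w) (yk k) - (fun w => F w - A w) (xk k)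
      = F (yk k) - F (xk k) - A (yk k - xk k) := by
    simp [map_sub]; abel
  rwa [he] at this

set_option maxHeartbeats 1000000

theorem stmt3 {n m : ℕ} (ψ : EuclideanSpace ℝ (Fin m) → ℝ)
    (F : EuclideanSpace ℝ (Fin n) → EuclideanSpace ℝ (Fin m))
    (hψ : ConvexOn ℝ Set.univ ψ) (hF : ContDiff ℝ 1 F)
    (φ : EuclideanSpace ℝ (Fin n) → EuclideanSpace ℝ (Fin n) → ℝ)
    (hφ : ∀ y x, φ y x = ψ (F x + fderiv ℝ F x (y - x))) :
    (∀ (x : EuclideanSpace ℝ (Fin n)) (xk yk : ℕ → EuclideanSpace ℝ (Fin n)),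
      Filter.Tendsto xk Filter.atTop (𝓝 x) → Filter.Tendsto yk Filter.atTop (𝓝 x) →
      ∃ ε : ℕ → ℝ, (∀ k, 0 ≤ ε k) ∧ Filter.Tendsto ε Filter.atTop (𝓝 0) ∧
        ∀ k, ψ (F (yk k)) ≤ φ (yk k) (xk k) + ε k * ‖yk k - xk k‖) ∧
    (∀ x, ConvexOn ℝ Set.univ (fun y => φ y x)) ∧
    (∀ x, φ x x = ψ (F x)) ∧
    (∀ x, convexSubdiff (fun y => φ y x) x ⊆ clarkeSubdiff (fun u => ψ (F u)) x) := by
  refine ⟨?_, ?_, ?_, ?_⟩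
  · -- strictness
    intro x xk yk hxk hyk
    refine ⟨fun k => if ‖yk k - xk k‖ = 0 then 0 else
        max 0 ((ψ (F (yk k)) - φ (yk k) (xk k)) / ‖yk k - xk k‖), fun k => ?_, ?_, fun k => ?_⟩
    · by_cases h : ‖yk k - xk k‖ = 0 <;> simp [h, le_max_left]
    · rw [NormedAddCommGroup.tendsto_nhds_zero]
      intro δ hδ
      obtain ⟨K, r, hr, hK⟩ := locLip_ball hψ.locallyLipschitz (F x)
      set ε' : ℝ := δ / (2 * ((K : ℝ) + 1)) with hε'def
      have hK0 : (0:ℝ) ≤ K := K.coe_nonneg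
      have hε' : 0 < ε' := by positivity
      have hkey := key_est hF x hxk hyk hε'
      have h1 : Tendsto (fun k => F (yk k)) atTop (𝓝 (F x)) := (hF.continuous.tendsto x).comp hyk
      have happ : Tendsto (fun k => fderiv ℝ F (xk k) (yk k - xk k)) atTop (𝓝 0) := by
        have hp : Tendsto (fun k => (fderiv ℝ F (xk k), yk k - xk k)) atTop
            (𝓝 (fderiv ℝ F x, 0)) := by
          refine Tendsto.prodMk_nhds ?_ ?_
          · exact ((hF.continuous_fderiv one_ne_zero).tendsto x).comp hxk
          · have := hyk.sub hxk; simpa using this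
        have := (isBoundedBilinearMap_apply.continuous.tendsto (fderiv ℝ F x, 0)).comp hp
        simpa only [Function.comp_def, map_zero] using this
      have h2 : Tendsto (fun k => F (xk k) + fderiv ℝ F (xk k) (yk k - xk k)) atTop (𝓝 (F x)) := by
        have := ((hF.continuous.tendsto x).comp hxk).add happ
        simpa using this
      filter_upwards [hkey, h1.eventually_mem (ball_mem_nhds _ hr),
        h2.eventually_mem (ball_mem_nhds _ hr)] with k hk hb1 hb2
      by_cases h : ‖yk k - xk k‖ = 0
      · simp [h, hδ]
      · have hnorm : 0 < ‖yk k - xk k‖ := lt_of_le_of_ne (norm_nonneg _) (Ne.symm h)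
        have hd : ψ (F (yk k)) - φ (yk k) (xk k) ≤ (K : ℝ) * (ε' * ‖yk k - xk k‖) := by
          rw [hφ]
          calc ψ (F (yk k)) - ψ (F (xk k) + fderiv ℝ F (xk k) (yk k - xk k))
              ≤ |ψ (F (yk k)) - ψ (F (xk k) + fderiv ℝ F (xk k) (yk k - xk k))| := le_abs_self _
            _ = dist (ψ (F (yk k))) (ψ (F (xk k) + fderiv ℝ F (xk k) (yk k - xk k))) := by
                rw [Real.dist_eq]
            _ ≤ (K : ℝ) * dist (F (yk k)) (F (xk k) + fderiv ℝ F (xk k) (yk k - xk k)) :=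
                hK.dist_le_mul _ hb1 _ hb2
            _ = (K : ℝ) * ‖F (yk k) - F (xk k) - fderiv ℝ F (xk k) (yk k - xk k)‖ := by
                rw [dist_eq_norm, sub_add_eq_sub_sub]
            _ ≤ (K : ℝ) * (ε' * ‖yk k - xk k‖) := by gcongr
        have hq : (ψ (F (yk k)) - φ (yk k) (xk k)) / ‖yk k - xk k‖ ≤ (K : ℝ) * ε' := by
          rw [div_le_iff₀ hnorm]
          calc ψ (F (yk k)) - φ (yk k) (xk k) ≤ (K : ℝ) * (ε' * ‖yk k - xk k‖) := hd
            _ = (K : ℝ) * ε' * ‖yk k - xk k‖ := by ring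
        have hKε : (K : ℝ) * ε' < δ := by
          have hc : ε' * (2 * ((K : ℝ) + 1)) = δ := div_mul_cancel₀ _ (by positivity)
          nlinarith [mul_pos hε' (show (0:ℝ) < (K:ℝ) + 2 by linarith)]
        rw [if_neg h, Real.norm_eq_abs, abs_of_nonneg (le_max_left _ _)]
        exact max_lt hδ (lt_of_le_of_lt hq hKε)
    · dsimp only
      by_cases h : ‖yk k - xk k‖ = 0
      · have e : yk k = xk k := by rwa [norm_eq_zero, sub_eq_zero] at h
        rw [if_pos h, hφ, e]
        simp
      · rw [if_neg h]
        have hnorm : 0 < ‖yk k - xk k‖ := lt_of_le_of_ne (norm_nonneg _) (Ne.symm h)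
        have : (ψ (F (yk k)) - φ (yk k) (xk k)) / ‖yk k - xk k‖ * ‖yk k - xk k‖
            = ψ (F (yk k)) - φ (yk k) (xk k) := div_mul_cancel₀ _ (ne_of_gt hnorm)
        nlinarith [mul_le_mul_of_nonneg_right
          (le_max_right 0 ((ψ (F (yk k)) - φ (yk k) (xk k)) / ‖yk k - xk k‖))
          (norm_nonneg (yk k - xk k))]
  · -- convexity of the model
    intro x
    refine ⟨convex_univ, fun y₁ _ y₂ _ a b ha hb hab => ?_⟩
    simp only [hφ]
    have hb' : b = 1 - a := by linarith
    subst hb'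
    have hcomb : F x + fderiv ℝ F x (a • y₁ + (1-a) • y₂ - x)
        = a • (F x + fderiv ℝ F x (y₁ - x)) + (1-a) • (F x + fderiv ℝ F x (y₂ - x)) := by
      simp only [map_add, map_sub, map_smul]
      module
    rw [hcomb]
    exact hψ.2 (Set.mem_univ _) (Set.mem_univ _) ha hb hab
  · -- exactness at the base point
    intro x
    rw [hφ]; simp
  · -- subdifferential inclusion
    intro x g hg d
    obtain ⟨K, r, hr, hK⟩ := locLip_ball hψ.locallyLipschitz (F x)
    obtain ⟨M, t, ht, hM⟩ := (hF.contDiffAt (x := x)).exists_lipschitzOnWith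
    obtain ⟨ρ₁, hρ₁, hball₁⟩ := Metric.mem_nhds_iff.1 ht
    obtain ⟨ρ₂, hρ₂, hρ₂'⟩ := Metric.continuousAt_iff.1 (hF.continuous.continuousAt (x := x)) r hr
    set ρ := min ρ₁ ρ₂ with hρdef
    have hρ : 0 < ρ := lt_min hρ₁ hρ₂
    have hFball : ∀ z ∈ ball x ρ, F z ∈ ball (F x) r := fun z hz => by
      exact mem_ball.2 (hρ₂' (lt_of_lt_of_le (mem_ball.1 hz) (min_le_right _ _)))
    have hsub : ball x ρ ⊆ t := fun z hz =>
      hball₁ (mem_ball.2 (lt_of_lt_of_le (mem_ball.1 hz) (min_le_left _ _)))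
    set q : EuclideanSpace ℝ (Fin n) × ℝ → ℝ :=
      fun p => (ψ (F (p.1 + p.2 • d)) - ψ (F p.1)) / p.2 with hqdef
    set P := (𝓝 x) ×ˢ (𝓝[>] (0 : ℝ)) with hPdef
    set c0 : ℝ := ρ / (2 * (‖d‖ + 1)) with hc0def
    have hc0 : 0 < c0 := by positivity
    have hc0' : c0 * (‖d‖ + 1) = ρ / 2 := by
      rw [hc0def]; field_simp
    have hmem : ∀ᶠ p in P, p.1 ∈ ball x ρ ∧ p.1 + p.2 • d ∈ ball x ρ ∧ 0 < p.2 := by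
      have h1 : ∀ᶠ p in P, p.1 ∈ ball x (ρ/2) :=
        Eventually.prod_inl (eventually_mem_set.2 (ball_mem_nhds x (by positivity))) _
      have h2 : ∀ᶠ p in P, p.2 ∈ Set.Ioo (0:ℝ) c0 :=
        Eventually.prod_inr (eventually_mem_set.2 (Ioo_mem_nhdsGT_of_mem ⟨le_refl 0, hc0⟩)) _
      filter_upwards [h1, h2] with p hp1 hp2
      have hps : 0 < p.2 := hp2.1
      have hball2 : p.1 + p.2 • d ∈ ball x ρ := by
        rw [mem_ball, dist_eq_norm]
        have he : p.1 + p.2 • d - x = (p.1 - x) + p.2 • d := by abel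
        have hsmul : ‖p.2 • d‖ = p.2 * ‖d‖ := by
          rw [norm_smul, Real.norm_eq_abs, abs_of_pos hps]
        have h1' : ‖p.1 - x‖ < ρ/2 := by
          have := mem_ball.1 hp1; rwa [dist_eq_norm] at this
        have h2' : p.2 * ‖d‖ < ρ/2 := by
          have hlt : p.2 * ‖d‖ < c0 * (‖d‖ + 1) := by
            nlinarith [hp2.2, norm_nonneg d, hps]
          linarith [hc0' ▸ hlt]
        calc ‖p.1 + p.2 • d - x‖ ≤ ‖p.1 - x‖ + ‖p.2 • d‖ := by rw [he]; exact norm_add_le _ _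
          _ < ρ := by rw [hsmul]; linarith
      exact ⟨ball_subset_ball (by linarith) hp1, hball2, hps⟩
    have hbd : P.IsBoundedUnder (· ≤ ·) q := by
      refine isBoundedUnder_of_eventually_le (a := (K:ℝ) * (M:ℝ) * ‖d‖) ?_
      filter_upwards [hmem] with p hp
      obtain ⟨hp1, hp2, hp3⟩ := hp
      have hsmul : ‖p.2 • d‖ = p.2 * ‖d‖ := by
        rw [norm_smul, Real.norm_eq_abs, abs_of_pos hp3]
      have hstep : ψ (F (p.1 + p.2 • d)) - ψ (F p.1) ≤ (K:ℝ) * ((M:ℝ) * (p.2 * ‖d‖)) := by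
        calc ψ (F (p.1 + p.2 • d)) - ψ (F p.1)
            ≤ dist (ψ (F (p.1 + p.2 • d))) (ψ (F p.1)) := by
              rw [Real.dist_eq]; exact le_abs_self _
          _ ≤ (K:ℝ) * dist (F (p.1 + p.2 • d)) (F p.1) :=
              hK.dist_le_mul _ (hFball _ hp2) _ (hFball _ hp1)
          _ ≤ (K:ℝ) * ((M:ℝ) * dist (p.1 + p.2 • d) p.1) := by
              have := hM.dist_le_mul _ (hsub hp2) _ (hsub hp1)
              gcongr
          _ = (K:ℝ) * ((M:ℝ) * (p.2 * ‖d‖)) := by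
              rw [dist_eq_norm, add_sub_cancel_left, hsmul]
      show (ψ (F (p.1 + p.2 • d)) - ψ (F p.1)) / p.2 ≤ (K:ℝ) * (M:ℝ) * ‖d‖
      rw [div_le_iff₀ hp3]
      calc ψ (F (p.1 + p.2 • d)) - ψ (F p.1) ≤ (K:ℝ) * ((M:ℝ) * (p.2 * ‖d‖)) := hstep
        _ = (K:ℝ) * (M:ℝ) * ‖d‖ * p.2 := by ring
    have hA : HasFDerivAt F (fderiv ℝ F x) x := (hF.differentiable one_ne_zero x).hasFDerivAt
    have key0 : ∀ s : ℝ, 0 < s →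
        (inner ℝ g d : ℝ) * s ≤ ψ (F x + s • (fderiv ℝ F x d)) - ψ (F x) := by
      intro s hs
      have h := hg (x + s • d)
      simp only [hφ, sub_self, map_zero, add_zero, add_sub_cancel_left, map_smul,
        real_inner_smul_right] at h
      linarith
    have htend : Tendsto (fun s : ℝ => s • d) (𝓝[>] (0:ℝ)) (𝓝 (0 : EuclideanSpace ℝ (Fin n))) :=
      ((continuous_id.smul continuous_const).tendsto' 0 0 (by simp)).mono_left nhdsWithin_le_nhds
    have ho : (fun s : ℝ => F (x + s • d) - F x - fderiv ℝ F x (s • d))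
        =o[𝓝[>] (0:ℝ)] (fun s => s • d) :=
      (hasFDerivAt_iff_isLittleO_nhds_zero.1 hA).comp_tendsto htend
    have main : ∀ c : ℝ, c < (inner ℝ g d : ℝ) → c ≤ clarkeD (fun u => ψ (F u)) x d := by
      intro c hc
      set ε' : ℝ := ((inner ℝ g d : ℝ) - c) / (((K:ℝ) + 1) * (‖d‖ + 1)) with hε'def
      have hε' : 0 < ε' := by
        rw [hε'def]
        have : (0:ℝ) < (inner ℝ g d : ℝ) - c := by linarith
        positivity
      have hKε : (K:ℝ) * (ε' * ‖d‖) < (inner ℝ g d : ℝ) - c := by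
        have hcan : ε' * (((K:ℝ) + 1) * (‖d‖ + 1)) = (inner ℝ g d : ℝ) - c :=
          div_mul_cancel₀ _ (by positivity)
        nlinarith [mul_pos hε' (show (0:ℝ) < (K:ℝ) + ‖d‖ + 1 by positivity), K.coe_nonneg,
          norm_nonneg d]
      have htend2 : Tendsto (fun s : ℝ => F (x + s • d)) (𝓝[>] (0:ℝ)) (𝓝 (F x)) := by
        have : Tendsto (fun s : ℝ => x + s • d) (𝓝[>] (0:ℝ)) (𝓝 x) := by
          have hcx : Tendsto (fun _ : ℝ => x) (𝓝[>] (0:ℝ)) (𝓝 x) := tendsto_const_nhds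
          simpa using hcx.add htend
        exact (hF.continuous.tendsto x).comp this
      have htend3 : Tendsto (fun s : ℝ => F x + s • (fderiv ℝ F x d)) (𝓝[>] (0:ℝ))
          (𝓝 (F x)) := by
        have h0 : Tendsto (fun s : ℝ => s • (fderiv ℝ F x d)) (𝓝[>] (0:ℝ)) (𝓝 0) :=
          ((continuous_id.smul continuous_const).tendsto' 0 0 (by simp)).mono_left
            nhdsWithin_le_nhds
        have hcx : Tendsto (fun _ : ℝ => F x) (𝓝[>] (0:ℝ)) (𝓝 (F x)) := tendsto_const_nhds
        simpa using hcx.add h0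
      have hslice : ∀ᶠ s in 𝓝[>] (0:ℝ), c ≤ q (x, s) := by
        have hev4 : ∀ᶠ s in 𝓝[>] (0:ℝ), 0 < s := eventually_mem_set.2 self_mem_nhdsWithin
        filter_upwards [ho.def hε', htend2.eventually_mem (ball_mem_nhds _ hr),
          htend3.eventually_mem (ball_mem_nhds _ hr), hev4] with s h1 h2 h3 hs
        show c ≤ (ψ (F (x + s • d)) - ψ (F x)) / s
        rw [le_div_iff₀ hs]
        have hsmul : ‖s • d‖ = s * ‖d‖ := by
          rw [norm_smul, Real.norm_eq_abs, abs_of_pos hs]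
        have hlip : ψ (F x + s • (fderiv ℝ F x d)) - ψ (F (x + s • d))
            ≤ (K:ℝ) * (ε' * (s * ‖d‖)) := by
          calc ψ (F x + s • (fderiv ℝ F x d)) - ψ (F (x + s • d))
              ≤ dist (ψ (F x + s • (fderiv ℝ F x d))) (ψ (F (x + s • d))) := by
                rw [Real.dist_eq]; exact le_abs_self _
            _ ≤ (K:ℝ) * dist (F x + s • (fderiv ℝ F x d)) (F (x + s • d)) :=
                hK.dist_le_mul _ h3 _ h2
            _ = (K:ℝ) * ‖F (x + s • d) - F x - fderiv ℝ F x (s • d)‖ := by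
                rw [dist_eq_norm, norm_sub_rev]
                congr 1
                rw [map_smul]
                abel_nf
            _ ≤ (K:ℝ) * (ε' * ‖s • d‖) := by gcongr
            _ = (K:ℝ) * (ε' * (s * ‖d‖)) := by rw [hsmul]
        have hkey := key0 s hs
        have hmul : ((K:ℝ) * (ε' * ‖d‖)) * s < ((inner ℝ g d : ℝ) - c) * s :=
          mul_lt_mul_of_pos_right hKε hs
        nlinarith
      have hembed : Tendsto (fun s : ℝ => ((x : EuclideanSpace ℝ (Fin n)), s)) (𝓝[>] (0:ℝ)) P :=
        Tendsto.prodMk tendsto_const_nhds tendsto_id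
      have hfreq : ∃ᶠ p in P, c ≤ q p := hembed.frequently hslice.frequently
      exact le_limsup_of_frequently_le hfreq hbd
    by_contra hcon
    push_neg at hcon
    have := main ((clarkeD (fun u => ψ (F u)) x d + (inner ℝ g d : ℝ)) / 2) (by linarith)
    linarith
end

section
/- Let f : ℝⁿ → ℝ be locally Lipschitz and lower C¹ at x̄, meaning: for xⱼ, yⱼ → x̄ and every gⱼ ∈ ∂f(yⱼ) there exist εⱼ → 0⁺ such that f(yⱼ) ≤ f(xⱼ) + gⱼᵀ(yⱼ - xⱼ) + εⱼ‖yⱼ - xⱼ‖. Fix c > 0 and define the downshifted tangent at trial point z with subgradient g ∈ ∂f(z) and serious point x by m(y) = f(z) + gᵀ(y - z) - s(z,x,g) with downshift s(z,x,g) = max{f(z) + gᵀ(x - z) - f(x) + c‖z - x‖², 0}. Then for all sequences zⱼ, xⱼ → x̄ and every choice gⱼ ∈ ∂f(zⱼ) there exist ε̃ⱼ → 0⁺ such that f(zⱼ) ≤ mⱼ(zⱼ) + ε̃ⱼ‖zⱼ - xⱼ‖, where mⱼ is the downshifted tangent with data (zⱼ, xⱼ, gⱼ). -/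
open Filter Topology Metric

/-- The downshift `s(z,x,g)`. -/
noncomputable def downshift {n : ℕ} (f : EuclideanSpace ℝ (Fin n) → ℝ) (c : ℝ)
    (z x g : EuclideanSpace ℝ (Fin n)) : ℝ :=
  max (f z + (inner ℝ g (x - z) : ℝ) - f x + c * ‖z - x‖^2) 0

/-- The downshifted tangent `m(y) = f(z) + gᵀ(y-z) - s(z,x,g)`. -/
noncomputable def downshiftedTangent {n : ℕ} (f : EuclideanSpace ℝ (Fin n) → ℝ) (c : ℝ)
    (z x g y : EuclideanSpace ℝ (Fin n)) : ℝ :=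
  f z + (inner ℝ g (y - z) : ℝ) - downshift f c z x g

theorem stmt6 {n : ℕ} (f : EuclideanSpace ℝ (Fin n) → ℝ) (hf : LocallyLipschitz f)
    (xbar : EuclideanSpace ℝ (Fin n)) (c : ℝ) (hc : 0 < c)
    (hlc1 : ∀ (x y : ℕ → EuclideanSpace ℝ (Fin n)) (g : ℕ → EuclideanSpace ℝ (Fin n)),
      Filter.Tendsto x Filter.atTop (𝓝 xbar) → Filter.Tendsto y Filter.atTop (𝓝 xbar) →
      (∀ j, g j ∈ clarkeSubdiff f (y j)) →
      ∃ ε : ℕ → ℝ, (∀ j, 0 ≤ ε j) ∧ Filter.Tendsto ε Filter.atTop (𝓝 0) ∧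
        ∀ j, f (y j) ≤ f (x j) + (inner ℝ (g j) (y j - x j) : ℝ) + ε j * ‖y j - x j‖) :
    ∀ (z x : ℕ → EuclideanSpace ℝ (Fin n)) (g : ℕ → EuclideanSpace ℝ (Fin n)),
      Filter.Tendsto z Filter.atTop (𝓝 xbar) → Filter.Tendsto x Filter.atTop (𝓝 xbar) →
      (∀ j, g j ∈ clarkeSubdiff f (z j)) →
      ∃ ε : ℕ → ℝ, (∀ j, 0 ≤ ε j) ∧ Filter.Tendsto ε Filter.atTop (𝓝 0) ∧
        ∀ j, f (z j) ≤ downshiftedTangent f c (z j) (x j) (g j) (z j) + ε j * ‖z j - x j‖ := by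
  intro z x g hz hx hg
  obtain ⟨ε, hε0, hεlim, hεineq⟩ := hlc1 x z g hx hz hg
  refine ⟨fun j => ε j + c * ‖z j - x j‖, fun j => ?_, ?_, fun j => ?_⟩
  · have h := hε0 j
    show 0 ≤ ε j + c * ‖z j - x j‖
    positivity
  · have : Tendsto (fun j => z j - x j) atTop (𝓝 (xbar - xbar)) := hz.sub hx
    simp only [sub_self] at this
    have hnorm : Tendsto (fun j => ‖z j - x j‖) atTop (𝓝 0) := by
      simpa using this.norm
    have := hεlim.add ((hnorm.const_mul c).congr (fun j => rfl))
    simpa using this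
  · have h1 := hεineq j
    have key : f (z j) + (inner ℝ (g j) (x j - z j) : ℝ) - f (x j) ≤ ε j * ‖z j - x j‖ := by
      have : (inner ℝ (g j) (x j - z j) : ℝ) = - (inner ℝ (g j) (z j - x j) : ℝ) := by
        rw [← inner_neg_right, neg_sub]
      rw [this]; linarith
    simp only [downshiftedTangent, downshift, sub_self, inner_zero_right]
    rcases le_or_gt (f (z j) + (inner ℝ (g j) (x j - z j) : ℝ) - f (x j) + c * ‖z j - x j‖^2) 0 with h | h
    · rw [max_eq_right h]
      nlinarith [norm_nonneg (z j - x j), hε0 j]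
    · rw [max_eq_left h.le]
      nlinarith [norm_nonneg (z j - x j), sq_abs ‖z j - x j‖]
end

section
/- Let f : ℝⁿ → ℝ be weakly lower C¹ at x̄: for every ε > 0 there exists δ > 0 such that for all x, z ∈ B(x̄,δ), f(x) - f(z) ≥ -f°(z, z - x) - ε‖x - z‖. Fix c > 0, and for z, x define g'(z,x) ∈ ∂f(z) achieving g'ᵀ(x - z) = -f°(z, z - x), with the corresponding downshifted tangent m(y) = f(z) + g'ᵀ(y - z) - s, s = max{f(z) + g'ᵀ(x - z) - f(x) + c‖z - x‖², 0}. Then for all sequences zⱼ, xⱼ → x̄ there exist εⱼ → 0⁺ with f(zⱼ) ≤ mⱼ(zⱼ) + εⱼ‖zⱼ - xⱼ‖. -/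
open Filter Topology Metric

theorem stmt8 {n : ℕ} (f : EuclideanSpace ℝ (Fin n) → ℝ) (hf : LocallyLipschitz f)
    (xbar : EuclideanSpace ℝ (Fin n)) (c : ℝ) (hc : 0 < c)
    (hwlc1 : ∀ ε > (0:ℝ), ∃ δ > (0:ℝ), ∀ x ∈ Metric.ball xbar δ, ∀ z ∈ Metric.ball xbar δ,
      f x - f z ≥ -(clarkeD f z (z - x)) - ε * ‖x - z‖)
    (g' : EuclideanSpace ℝ (Fin n) → EuclideanSpace ℝ (Fin n) → EuclideanSpace ℝ (Fin n))
    (hg'mem : ∀ z x, g' z x ∈ clarkeSubdiff f z)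
    (hg'eq : ∀ z x, (inner ℝ (g' z x) (x - z) : ℝ) = -(clarkeD f z (z - x))) :
    ∀ (z x : ℕ → EuclideanSpace ℝ (Fin n)),
      Filter.Tendsto z Filter.atTop (𝓝 xbar) → Filter.Tendsto x Filter.atTop (𝓝 xbar) →
      ∃ ε : ℕ → ℝ, (∀ j, 0 ≤ ε j) ∧ Filter.Tendsto ε Filter.atTop (𝓝 0) ∧
        ∀ j, f (z j) ≤
          downshiftedTangent f c (z j) (x j) (g' (z j) (x j)) (z j) + ε j * ‖z j - x j‖ := by
  intro z x hz hx
  set s : ℕ → ℝ := fun j => downshift f c (z j) (x j) (g' (z j) (x j)) with hs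
  -- key bound on s
  have hs0 : ∀ j, 0 ≤ s j := fun j => le_max_right _ _
  have key : ∀ ε > (0:ℝ), ∃ N, ∀ j ≥ N, s j ≤ (ε/2) * ‖z j - x j‖ := by
    intro ε hε
    obtain ⟨δ, hδ, hδ'⟩ := hwlc1 (ε/4) (by linarith)
    have hzb : ∀ᶠ j in atTop, z j ∈ Metric.ball xbar δ :=
      hz (Metric.ball_mem_nhds _ hδ)
    have hxb : ∀ᶠ j in atTop, x j ∈ Metric.ball xbar δ :=
      hx (Metric.ball_mem_nhds _ hδ)
    have hdist : Tendsto (fun j => ‖z j - x j‖) atTop (𝓝 0) := by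
      have : Tendsto (fun j => z j - x j) atTop (𝓝 (xbar - xbar)) := hz.sub hx
      rw [sub_self] at this
      simpa using this.norm
    have hsmall : ∀ᶠ j in atTop, ‖z j - x j‖ < ε / (4 * c) := by
      have := hdist (Metric.ball_mem_nhds 0 (show (0:ℝ) < ε / (4*c) by positivity))
      filter_upwards [this] with j hj
      simpa [Real.dist_eq, abs_of_nonneg (norm_nonneg _)] using hj
    obtain ⟨N, hN⟩ := (hzb.and (hxb.and hsmall)).exists_forall_of_atTop
    refine ⟨N, fun j hj => ?_⟩
    obtain ⟨h1, h2, h3⟩ := hN j hj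
    have hwl := hδ' (x j) h2 (z j) h1
    rw [← hg'eq (z j) (x j)] at hwl
    have hA : f (z j) + (inner ℝ (g' (z j) (x j)) (x j - z j) : ℝ) - f (x j)
        ≤ (ε/4) * ‖z j - x j‖ := by
      have : ‖x j - z j‖ = ‖z j - x j‖ := norm_sub_rev _ _
      linarith [hwl, this ▸ hwl]
    have hq : c * ‖z j - x j‖^2 ≤ (ε/4) * ‖z j - x j‖ := by
      have hn : (0:ℝ) ≤ ‖z j - x j‖ := norm_nonneg _
      have : c * ‖z j - x j‖ ≤ ε/4 := by
        calc c * ‖z j - x j‖ ≤ c * (ε / (4*c)) := by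
              exact mul_le_mul_of_nonneg_left h3.le hc.le
          _ = ε/4 := by field_simp
      calc c * ‖z j - x j‖^2 = (c * ‖z j - x j‖) * ‖z j - x j‖ := by ring
        _ ≤ (ε/4) * ‖z j - x j‖ := mul_le_mul_of_nonneg_right this hn
    have hεn : (0:ℝ) ≤ (ε/2) * ‖z j - x j‖ := by positivity
    have : f (z j) + (inner ℝ (g' (z j) (x j)) (x j - z j) : ℝ) - f (x j)
        + c * ‖z j - x j‖^2 ≤ (ε/2) * ‖z j - x j‖ := by linarith
    exact max_le this hεn
  -- define epsilon
  refine ⟨fun j => if ‖z j - x j‖ = 0 then 0 else s j / ‖z j - x j‖, ?_, ?_, ?_⟩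
  · intro j
    dsimp only
    split_ifs with h
    · exact le_refl 0
    · exact div_nonneg (hs0 j) (norm_nonneg _)
  · rw [Metric.tendsto_atTop]
    intro ε hε
    obtain ⟨N, hN⟩ := key ε hε
    refine ⟨N, fun j hj => ?_⟩
    have hb := hN j hj
    rw [Real.dist_eq, sub_zero]
    split_ifs with h
    · simpa using hε
    · have hn : 0 < ‖z j - x j‖ := lt_of_le_of_ne (norm_nonneg _) (Ne.symm h)
      rw [abs_of_nonneg (div_nonneg (hs0 j) hn.le)]
      rw [div_lt_iff₀ hn]
      calc s j ≤ (ε/2) * ‖z j - x j‖ := hb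
        _ < ε * ‖z j - x j‖ := by
            apply mul_lt_mul_of_pos_right _ hn; linarith
  · intro j
    unfold downshiftedTangent
    dsimp only
    have hss : s j ≤ (if ‖z j - x j‖ = 0 then 0 else s j / ‖z j - x j‖) * ‖z j - x j‖ := by
      split_ifs with h
      · have hzx : z j = x j := by
          rwa [norm_sub_eq_zero_iff] at h
        have : s j = 0 := by
          simp [hs, downshift, hzx, le_of_lt hc]
        simp [this]
      · have hn : 0 < ‖z j - x j‖ := lt_of_le_of_ne (norm_nonneg _) (Ne.symm h)
        rw [div_mul_cancel₀ _ hn.ne']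
    have : (inner ℝ (g' (z j) (x j)) (z j - z j) : ℝ) = 0 := by simp
    rw [this]
    show f (z j) ≤ f (z j) + 0 - s j + _
    linarith
end

section
/- Let f = g - h with g, h : ℝⁿ → ℝ convex and suppose ∂f(x) = ∂g(x) - ∂h(x) (Clarke subdifferential equals the difference of convex subdifferentials) for all x. Then φ(y,x) = g(y) + [-h(x) + (-h)°(x, y - x)] is a strict model of f, where (-h)°(x,d) = max{-qᵀd : q ∈ ∂h(x)} is the Clarke directional derivative of -h. -/
open Filter Topology Metric

open Set

variable {n : ℕ}


noncomputable def dq (F : EuclideanSpace ℝ (Fin n) → ℝ) (x v : EuclideanSpace ℝ (Fin n))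
    (t : ℝ) : ℝ := (F (x + t • v) - F x) / t

noncomputable def ddir (F : EuclideanSpace ℝ (Fin n) → ℝ) (x v : EuclideanSpace ℝ (Fin n)) : ℝ :=
  sInf (dq F x v '' Set.Ioc (0:ℝ) 1)

lemma dq_mono {F : EuclideanSpace ℝ (Fin n) → ℝ} (hF : ConvexOn ℝ Set.univ F)
    (x v : EuclideanSpace ℝ (Fin n)) {s t : ℝ} (hs : 0 < s) (hst : s ≤ t) :
    dq F x v s ≤ dq F x v t := by
  have ht : 0 < t := lt_of_lt_of_le hs hst
  have hpt : x + s • v = (1 - s/t) • x + (s/t) • (x + t • v) := by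
    rw [smul_add, ← add_assoc, ← add_smul, sub_add_cancel, one_smul, smul_smul,
      div_mul_cancel₀ _ ht.ne']
  have key := hF.2 (Set.mem_univ x) (Set.mem_univ (x + t • v))
    (sub_nonneg.2 ((div_le_one ht).2 hst)) (by positivity : (0:ℝ) ≤ s/t) (by ring)
  rw [← hpt] at key
  have k2 : F (x + s • v) * t ≤ ((1 - s/t) * F x + (s/t) * F (x + t • v)) * t :=
    mul_le_mul_of_nonneg_right key ht.le
  have k3 : ((1 - s/t) * F x + (s/t) * F (x + t • v)) * t
      = F x * t - s * F x + s * F (x + t • v) := by field_simp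
  rw [dq, dq, div_le_div_iff₀ hs ht]
  nlinarith [k2, k3]

lemma dq_add_nonneg {F : EuclideanSpace ℝ (Fin n) → ℝ} (hF : ConvexOn ℝ Set.univ F)
    (x v : EuclideanSpace ℝ (Fin n)) {t : ℝ} (ht : 0 < t) :
    0 ≤ dq F x v t + dq F x (-v) t := by
  have hpt : x = (1/2 : ℝ) • (x + t • v) + (1/2 : ℝ) • (x + t • (-v)) := by
    module
  have key := hF.2 (Set.mem_univ (x + t • v)) (Set.mem_univ (x + t • (-v)))
    (by norm_num : (0:ℝ) ≤ 1/2) (by norm_num : (0:ℝ) ≤ 1/2) (by norm_num)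
  rw [← hpt] at key
  simp only [smul_eq_mul] at key
  rw [dq, dq, ← add_div, le_div_iff₀ ht]
  nlinarith [key]

lemma bddBelow_dq {F : EuclideanSpace ℝ (Fin n) → ℝ} (hF : ConvexOn ℝ Set.univ F)
    (x v : EuclideanSpace ℝ (Fin n)) :
    BddBelow (dq F x v '' Set.Ioc (0:ℝ) 1) := by
  refine ⟨-(dq F x (-v) 1), ?_⟩
  rintro _ ⟨t, ⟨ht0, ht1⟩, rfl⟩
  have h1 := dq_add_nonneg hF x v ht0
  have h2 := dq_mono hF x (-v) ht0 ht1
  linarith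

lemma nonempty_dq (F : EuclideanSpace ℝ (Fin n) → ℝ) (x v : EuclideanSpace ℝ (Fin n)) :
    (dq F x v '' Set.Ioc (0:ℝ) 1).Nonempty :=
  ⟨dq F x v 1, 1, by norm_num, rfl⟩

lemma ddir_le_dq {F : EuclideanSpace ℝ (Fin n) → ℝ} (hF : ConvexOn ℝ Set.univ F)
    (x v : EuclideanSpace ℝ (Fin n)) {t : ℝ} (ht : 0 < t) :
    ddir F x v ≤ dq F x v t := by
  rcases le_or_gt t 1 with h | h
  · exact csInf_le (bddBelow_dq hF x v) ⟨t, ⟨ht, h⟩, rfl⟩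
  · calc ddir F x v ≤ dq F x v 1 := csInf_le (bddBelow_dq hF x v) ⟨1, by norm_num, rfl⟩
      _ ≤ dq F x v t := dq_mono hF x v one_pos h.le

lemma le_ddir {F : EuclideanSpace ℝ (Fin n) → ℝ} (x v : EuclideanSpace ℝ (Fin n)) {c : ℝ}
    (hc : ∀ t : ℝ, 0 < t → t ≤ 1 → c ≤ dq F x v t) : c ≤ ddir F x v := by
  refine le_csInf (nonempty_dq F x v) ?_
  rintro _ ⟨t, ⟨ht0, ht1⟩, rfl⟩
  exact hc t ht0 ht1

lemma exists_dq_lt (F : EuclideanSpace ℝ (Fin n) → ℝ) (x v : EuclideanSpace ℝ (Fin n))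
    {ε : ℝ} (hε : 0 < ε) : ∃ t : ℝ, 0 < t ∧ t ≤ 1 ∧ dq F x v t < ddir F x v + ε := by
  obtain ⟨a, ⟨t, ⟨ht0, ht1⟩, rfl⟩, hlt⟩ := Real.lt_sInf_add_pos (nonempty_dq F x v) hε
  exact ⟨t, ht0, ht1, hlt⟩

lemma ddir_zero (F : EuclideanSpace ℝ (Fin n) → ℝ) (x : EuclideanSpace ℝ (Fin n)) :
    ddir F x 0 = 0 := by
  have : dq F x 0 '' Set.Ioc (0:ℝ) 1 = {0} := by
    apply Set.eq_singleton_iff_nonempty_unique_mem.2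
    constructor
    · exact ⟨0, 1, by norm_num, by simp [dq]⟩
    · rintro _ ⟨t, _, rfl⟩
      simp [dq]
  rw [ddir, this, csInf_singleton]

lemma dq_smul_eq (F : EuclideanSpace ℝ (Fin n) → ℝ) (x v : EuclideanSpace ℝ (Fin n))
    {c t : ℝ} (hc : c ≠ 0) (ht : t ≠ 0) : dq F x (c • v) t = c * dq F x v (c * t) := by
  rw [dq, dq, smul_smul, mul_comm t c]
  field_simp

lemma ddir_smul {F : EuclideanSpace ℝ (Fin n) → ℝ} (hF : ConvexOn ℝ Set.univ F)
    (x v : EuclideanSpace ℝ (Fin n)) {c : ℝ} (hc : 0 < c) :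
    ddir F x (c • v) = c * ddir F x v := by
  apply le_antisymm
  · apply le_of_forall_pos_le_add
    intro ε hε
    obtain ⟨t, ht0, ht1, hlt⟩ := exists_dq_lt F x v (div_pos hε hc)
    calc ddir F x (c • v) ≤ dq F x (c • v) (t/c) := ddir_le_dq hF x _ (div_pos ht0 hc)
      _ = c * dq F x v (c * (t/c)) := dq_smul_eq F x v hc.ne' (by positivity)
      _ = c * dq F x v t := by rw [mul_div_cancel₀ _ hc.ne']
      _ ≤ c * (ddir F x v + ε/c) := by nlinarith
      _ = c * ddir F x v + ε := by rw [mul_add, mul_div_cancel₀ _ hc.ne']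
  · apply le_of_forall_pos_le_add
    intro ε hε
    obtain ⟨t, ht0, ht1, hlt⟩ := exists_dq_lt F x (c • v) hε
    calc c * ddir F x v ≤ c * dq F x v (c * t) :=
        mul_le_mul_of_nonneg_left (ddir_le_dq hF x v (mul_pos hc ht0)) hc.le
      _ = dq F x (c • v) t := (dq_smul_eq F x v hc.ne' ht0.ne').symm
      _ ≤ ddir F x (c • v) + ε := hlt.le

lemma dq_add_le {F : EuclideanSpace ℝ (Fin n) → ℝ} (hF : ConvexOn ℝ Set.univ F)
    (x v w : EuclideanSpace ℝ (Fin n)) {t : ℝ} (ht : 0 < t) :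
    dq F x (v + w) t ≤ dq F x v (2*t) + dq F x w (2*t) := by
  have hpt : x + t • (v + w) = (1/2 : ℝ) • (x + (2*t) • v) + (1/2 : ℝ) • (x + (2*t) • w) := by
    module
  have key := hF.2 (Set.mem_univ (x + (2*t) • v)) (Set.mem_univ (x + (2*t) • w))
    (by norm_num : (0:ℝ) ≤ 1/2) (by norm_num : (0:ℝ) ≤ 1/2) (by norm_num)
  rw [← hpt] at key
  simp only [smul_eq_mul] at key
  rw [dq, dq, dq, ← add_div, div_le_div_iff₀ ht (by linarith)]
  nlinarith [key]

lemma ddir_subadd {F : EuclideanSpace ℝ (Fin n) → ℝ} (hF : ConvexOn ℝ Set.univ F)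
    (x v w : EuclideanSpace ℝ (Fin n)) :
    ddir F x (v + w) ≤ ddir F x v + ddir F x w := by
  apply le_of_forall_pos_le_add
  intro ε hε
  obtain ⟨t1, ht10, ht11, h1⟩ := exists_dq_lt F x v (half_pos hε)
  obtain ⟨t2, ht20, ht21, h2⟩ := exists_dq_lt F x w (half_pos hε)
  set t := min t1 t2 / 2 with htdef
  have ht0 : 0 < t := by positivity
  have h2t1 : 2 * t ≤ t1 := by
    rw [htdef]; rw [mul_div_cancel₀]; exact min_le_left _ _; norm_num
  have h2t2 : 2 * t ≤ t2 := by
    rw [htdef]; rw [mul_div_cancel₀]; exact min_le_right _ _; norm_num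
  calc ddir F x (v + w) ≤ dq F x (v + w) t := ddir_le_dq hF x _ ht0
    _ ≤ dq F x v (2*t) + dq F x w (2*t) := dq_add_le hF x v w ht0
    _ ≤ dq F x v t1 + dq F x w t2 :=
        add_le_add (dq_mono hF x v (by linarith) h2t1) (dq_mono hF x w (by linarith) h2t2)
    _ ≤ ddir F x v + ddir F x w + ε := by linarith

lemma ddir_convex {F : EuclideanSpace ℝ (Fin n) → ℝ} (hF : ConvexOn ℝ Set.univ F)
    (x v w : EuclideanSpace ℝ (Fin n)) {a b : ℝ} (ha : 0 ≤ a) (hb : 0 ≤ b) (hab : a + b = 1) :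
    ddir F x (a • v + b • w) ≤ a * ddir F x v + b * ddir F x w := by
  apply le_of_forall_pos_le_add
  intro ε hε
  obtain ⟨t1, ht10, ht11, h1⟩ := exists_dq_lt F x v hε
  obtain ⟨t2, ht20, ht21, h2⟩ := exists_dq_lt F x w hε
  set t := min t1 t2 with htdef
  have ht0 : 0 < t := lt_min ht10 ht20
  have hx : a • x + b • x = x := by rw [← add_smul, hab, one_smul]
  have h0 : a • (x + t • v) + b • (x + t • w) = (a • x + b • x) + t • (a • v + b • w) := by
    module
  have hpt : x + t • (a • v + b • w) = a • (x + t • v) + b • (x + t • w) := by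
    rw [h0, hx]
  have key := hF.2 (Set.mem_univ (x + t • v)) (Set.mem_univ (x + t • w)) ha hb hab
  rw [← hpt] at key
  simp only [smul_eq_mul] at key
  have hq : dq F x (a • v + b • w) t ≤ a * dq F x v t + b * dq F x w t := by
    rw [dq, dq, dq, div_le_iff₀ ht0]
    have hd : (a * ((F (x + t • v) - F x)/t) + b * ((F (x + t • w) - F x)/t)) * t
        = a * (F (x + t • v) - F x) + b * (F (x + t • w) - F x) := by
      field_simp
    have hxx : a * F x + b * F x = F x := by rw [← add_mul, hab, one_mul]
    linarith [key, hd, hxx]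
  have hm1 : dq F x v t ≤ dq F x v t1 := dq_mono hF x v ht0 (min_le_left _ _)
  have hm2 : dq F x w t ≤ dq F x w t2 := dq_mono hF x w ht0 (min_le_right _ _)
  calc ddir F x (a • v + b • w) ≤ dq F x (a • v + b • w) t := ddir_le_dq hF x _ ht0
    _ ≤ a * dq F x v t + b * dq F x w t := hq
    _ ≤ a * (ddir F x v + ε) + b * (ddir F x w + ε) := by
        have := mul_le_mul_of_nonneg_left (hm1.trans h1.le) ha
        have := mul_le_mul_of_nonneg_left (hm2.trans h2.le) hb
        linarith
    _ = a * ddir F x v + b * ddir F x w + ε := by linear_combination ε * hab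

lemma ddir_le_sub {F : EuclideanSpace ℝ (Fin n) → ℝ} (hF : ConvexOn ℝ Set.univ F)
    (x v : EuclideanSpace ℝ (Fin n)) : ddir F x v ≤ F (x + v) - F x := by
  have := ddir_le_dq hF x v one_pos
  rwa [dq, one_smul, div_one] at this

lemma sub_le_ddir {F : EuclideanSpace ℝ (Fin n) → ℝ} (hF : ConvexOn ℝ Set.univ F)
    (x y : EuclideanSpace ℝ (Fin n)) : F x - F y ≤ ddir F x (x - y) := by
  apply le_ddir
  intro t ht0 ht1
  have h1t : (0:ℝ) < 1 + t := by linarith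
  have hpt : x = (t/(1+t)) • y + (1/(1+t)) • (x + t • (x - y)) := by
    match_scalars <;> field_simp <;> ring
  have key := hF.2 (Set.mem_univ y) (Set.mem_univ (x + t • (x - y)))
    (by positivity : (0:ℝ) ≤ t/(1+t)) (by positivity : (0:ℝ) ≤ 1/(1+t))
    (by field_simp; ring)
  rw [← hpt] at key
  simp only [smul_eq_mul] at key
  rw [dq, le_div_iff₀ ht0]
  have k2 : F x * (1+t) ≤ (t/(1+t) * F y + 1/(1+t) * F (x + t • (x - y))) * (1+t) :=
    mul_le_mul_of_nonneg_right key h1t.le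
  have k3 : (t/(1+t) * F y + 1/(1+t) * F (x + t • (x - y))) * (1+t)
      = t * F y + F (x + t • (x - y)) := by field_simp
  nlinarith [k2, k3]

lemma uq_le {h : EuclideanSpace ℝ (Fin n) → ℝ} (hh : ConvexOn ℝ Set.univ h)
    (d y : EuclideanSpace ℝ (Fin n)) {s t : ℝ} (hs : 0 < s) (ht : 0 < t) :
    (h y - h (y + t • d))/t ≤ (h (y - s • d) - h (y + t • d))/(s + t) := by
  have hst : (0:ℝ) < s + t := by linarith
  have hpt : y = (s/(s+t)) • (y + t • d) + (t/(s+t)) • (y - s • d) := by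
    match_scalars <;> field_simp <;> ring
  have key := hh.2 (Set.mem_univ (y + t • d)) (Set.mem_univ (y - s • d))
    (by positivity : (0:ℝ) ≤ s/(s+t)) (by positivity : (0:ℝ) ≤ t/(s+t))
    (by field_simp)
  rw [← hpt] at key
  simp only [smul_eq_mul] at key
  rw [div_le_div_iff₀ ht hst]
  have k2 : h y * (s+t) ≤ (s/(s+t) * h (y + t • d) + t/(s+t) * h (y - s • d)) * (s+t) :=
    mul_le_mul_of_nonneg_right key hst.le
  have k3 : (s/(s+t) * h (y + t • d) + t/(s+t) * h (y - s • d)) * (s+t)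
      = s * h (y + t • d) + t * h (y - s • d) := by field_simp
  nlinarith [k2, k3]

lemma clarkeD_neg_eq {h : EuclideanSpace ℝ (Fin n) → ℝ} (hh : ConvexOn ℝ Set.univ h)
    (hc : Continuous h) (x d : EuclideanSpace ℝ (Fin n)) :
    clarkeD (fun u => -(h u)) x d = ddir h x (-d) := by
  set u : EuclideanSpace ℝ (Fin n) × ℝ → ℝ :=
    fun p => (h p.1 - h (p.1 + p.2 • d)) / p.2 with hu
  set F := (𝓝 x) ×ˢ (𝓝[>] (0 : ℝ)) with hF
  have hfun : clarkeD (fun u => -(h u)) x d = Filter.limsup u F := by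
    rw [clarkeD]
    congr 1
    funext p
    rw [hu]
    ring_nf
  rw [hfun]
  have hfst : Filter.Tendsto (fun p : EuclideanSpace ℝ (Fin n) × ℝ => p.1) F (𝓝 x) :=
    Filter.tendsto_fst
  have hsnd : Filter.Tendsto (fun p : EuclideanSpace ℝ (Fin n) × ℝ => p.2) F (𝓝[>] (0:ℝ)) :=
    Filter.tendsto_snd
  have hsnd0 : Filter.Tendsto (fun p : EuclideanSpace ℝ (Fin n) × ℝ => p.2) F (𝓝 (0:ℝ)) :=
    hsnd.mono_right nhdsWithin_le_nhds
  have hpos : ∀ᶠ p in F, 0 < p.2 := hsnd.eventually eventually_mem_nhdsWithin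
  -- the bounding family
  have hw : ∀ s : ℝ, 0 < s → Filter.Tendsto
      (fun p : EuclideanSpace ℝ (Fin n) × ℝ => (h (p.1 - s • d) - h (p.1 + p.2 • d))/(s + p.2))
      F (𝓝 (dq h x (-d) s)) := by
    intro s hs
    have hx1 : Filter.Tendsto (fun p : EuclideanSpace ℝ (Fin n) × ℝ => p.1 - s • d) F
        (𝓝 (x - s • d)) := hfst.sub tendsto_const_nhds
    have hx2 : Filter.Tendsto (fun p : EuclideanSpace ℝ (Fin n) × ℝ => p.1 + p.2 • d) F
        (𝓝 x) := by
      have := hfst.add (hsnd0.smul_const d)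
      simpa using this
    have hnum := ((hc.tendsto _).comp hx1).sub ((hc.tendsto _).comp hx2)
    have hden : Filter.Tendsto (fun p : EuclideanSpace ℝ (Fin n) × ℝ => s + p.2) F
        (𝓝 s) := by
      have : Filter.Tendsto (fun p : EuclideanSpace ℝ (Fin n) × ℝ => s + p.2) F (𝓝 (s + 0)) :=
        Filter.Tendsto.const_add s hsnd0
      simpa using this
    have := hnum.div hden hs.ne'
    have heq : dq h x (-d) s = (h (x - s • d) - h x)/s := by
      rw [dq, smul_neg, ← sub_eq_add_neg]
    rw [heq]
    exact this
  -- pointwise comparison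
  have hcomp : ∀ s : ℝ, 0 < s → ∀ᶠ p in F,
      u p ≤ (h (p.1 - s • d) - h (p.1 + p.2 • d))/(s + p.2) := by
    intro s hs
    filter_upwards [hpos] with p hp
    exact uq_le hh d p.1 hs hp
  -- the frequently-below path
  have hfreq : ∃ᶠ p in F, ddir h x (-d) ≤ u p := by
    have htm : Filter.Tendsto (fun t : ℝ => ((x - t • d, t) : EuclideanSpace ℝ (Fin n) × ℝ))
        (𝓝[>] (0:ℝ)) F := by
      refine Filter.Tendsto.prodMk ?_ tendsto_id
      have : Filter.Tendsto (fun t : ℝ => x - t • d) (𝓝 (0:ℝ)) (𝓝 x) := by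
        have h2 : Filter.Tendsto (fun t : ℝ => x - t • d) (𝓝 (0:ℝ)) (𝓝 (x - (0:ℝ) • d)) :=
          Filter.Tendsto.sub tendsto_const_nhds (tendsto_id.smul_const d)
        simpa using h2
      exact this.mono_left nhdsWithin_le_nhds
    have hev : ∀ᶠ t in 𝓝[>] (0:ℝ), ddir h x (-d) ≤ u (x - t • d, t) := by
      filter_upwards [eventually_mem_nhdsWithin] with t ht
      have h1 : u (x - t • d, t) = dq h x (-d) t := by
        rw [hu, dq, smul_neg, ← sub_eq_add_neg]
        simp
      rw [h1]
      exact ddir_le_dq hh x _ ht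
    exact htm.frequently hev.frequently
  -- bounded above
  have hbdd : Filter.IsBoundedUnder (· ≤ ·) F u := by
    have h1 := hw 1 one_pos
    have hev1 := h1.eventually (eventually_le_nhds (lt_add_one _))
    refine ⟨dq h x (-d) 1 + 1, ?_⟩
    rw [Filter.eventually_map]
    filter_upwards [hcomp 1 one_pos, hev1] with p h1p h2p
    exact h1p.trans h2p
  apply le_antisymm
  · refine le_csInf (nonempty_dq h x (-d)) ?_
    rintro _ ⟨s, ⟨hs0, hs1⟩, rfl⟩
    apply le_of_forall_pos_le_add
    intro ε hε
    refine Filter.limsup_le_of_le (Filter.IsCoboundedUnder.of_frequently_ge hfreq) ?_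
    have hev2 := (hw s hs0).eventually (eventually_le_nhds (by linarith : dq h x (-d) s
      < dq h x (-d) s + ε))
    filter_upwards [hcomp s hs0, hev2] with p h1p h2p
    exact h1p.trans h2p
  · exact Filter.le_limsup_of_frequently_le hfreq hbdd

lemma exists_subgrad_s9 {F : EuclideanSpace ℝ (Fin n) → ℝ} (hF : ConvexOn ℝ Set.univ F)
    (x : EuclideanSpace ℝ (Fin n)) {d : EuclideanSpace ℝ (Fin n)} (hd : d ≠ 0) :
    ∃ a : EuclideanSpace ℝ (Fin n), (∀ v, (inner ℝ a v : ℝ) ≤ ddir F x v) ∧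
      (inner ℝ a d : ℝ) = ddir F x d := by
  set pmap := (LinearPMap.mkSpanSingleton (K := ℝ) d (ddir F x d) hd :
    EuclideanSpace ℝ (Fin n) →ₗ.[ℝ] ℝ) with hpmap
  have hfle : ∀ z : pmap.domain, pmap z ≤ ddir F x z := by
    rintro ⟨z, hz⟩
    obtain ⟨c, hc⟩ := Submodule.mem_span_singleton.1 hz
    have hz2 : c • d ∈ pmap.domain := hc ▸ hz
    have hze : (⟨z, hz⟩ : pmap.domain) = ⟨c • d, hz2⟩ := Subtype.ext hc.symm
    rw [hze]
    have happ : pmap ⟨c • d, hz2⟩ = c • ddir F x d := LinearPMap.mkSpanSingleton'_apply _ _ _ c _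
    rw [happ]
    simp only [smul_eq_mul]
    rcases lt_trichotomy c 0 with hc0 | hc0 | hc0
    · have h0 : c • d + (-c) • d = 0 := by module
      have h1 : ddir F x (c • d + (-c) • d) ≤ ddir F x (c • d) + ddir F x ((-c) • d) :=
        ddir_subadd hF x _ _
      rw [h0, ddir_zero] at h1
      have h2 : ddir F x ((-c) • d) = (-c) * ddir F x d := ddir_smul hF x d (by linarith)
      rw [h2] at h1
      linarith
    · subst hc0
      simp [ddir_zero]
    · exact (ddir_smul hF x d hc0).ge
  obtain ⟨ℓ, hext, hle⟩ := exists_extension_of_le_sublinear pmap (ddir F x)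
    (fun c hc v => ddir_smul hF x v hc) (ddir_subadd hF x) hfle
  set a := (InnerProductSpace.toDual ℝ (EuclideanSpace ℝ (Fin n))).symm
    (LinearMap.toContinuousLinearMap ℓ) with ha
  have hav : ∀ v, (inner ℝ a v : ℝ) = ℓ v := by
    intro v
    rw [ha, InnerProductSpace.toDual_symm_apply]
    rfl
  refine ⟨a, fun v => (hav v).le.trans (hle v), ?_⟩
  rw [hav d]
  have hmem : d ∈ pmap.domain := Submodule.mem_span_singleton_self d
  have := hext ⟨d, hmem⟩
  rw [this]
  exact LinearPMap.mkSpanSingleton_apply ℝ ℝ hd _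

theorem stmt9 {n : ℕ} (g h : EuclideanSpace ℝ (Fin n) → ℝ)
    (hg : ConvexOn ℝ Set.univ g) (hh : ConvexOn ℝ Set.univ h)
    (f : EuclideanSpace ℝ (Fin n) → ℝ) (hfdef : ∀ x, f x = g x - h x)
    (hDC : ∀ x, clarkeSubdiff f x =
      {p | ∃ a ∈ convexSubdiff g x, ∃ b ∈ convexSubdiff h x, p = a - b})
    (φ : EuclideanSpace ℝ (Fin n) → EuclideanSpace ℝ (Fin n) → ℝ)
    (hφ : ∀ y x, φ y x = g y + (-(h x) + clarkeD (fun u => -(h u)) x (y - x))) :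
    (∀ x, ConvexOn ℝ Set.univ (fun y => φ y x)) ∧
    (∀ x, φ x x = f x) ∧
    (∀ x, convexSubdiff (fun y => φ y x) x ⊆ clarkeSubdiff f x) ∧
    (∀ (x : EuclideanSpace ℝ (Fin n)) (xk yk : ℕ → EuclideanSpace ℝ (Fin n)),
      Filter.Tendsto xk Filter.atTop (𝓝 x) → Filter.Tendsto yk Filter.atTop (𝓝 x) →
      ∃ ε : ℕ → ℝ, (∀ k, 0 ≤ ε k) ∧ Filter.Tendsto ε Filter.atTop (𝓝 0) ∧
        ∀ k, f (yk k) ≤ φ (yk k) (xk k) + ε k * ‖yk k - xk k‖) ∧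
    (∀ (x y : EuclideanSpace ℝ (Fin n)) (xk yk : ℕ → EuclideanSpace ℝ (Fin n)),
      Filter.Tendsto xk Filter.atTop (𝓝 x) → Filter.Tendsto yk Filter.atTop (𝓝 y) →
      Filter.limsup (fun k => φ (yk k) (xk k)) Filter.atTop ≤ φ y x) := by
  have hch : Continuous h := by
    have := ConvexOn.continuousOn isOpen_univ hh
    rwa [continuousOn_univ] at this
  have hcg : Continuous g := by
    have := ConvexOn.continuousOn isOpen_univ hg
    rwa [continuousOn_univ] at this
  have key : ∀ y x, φ y x = g y - h x + ddir h x (x - y) := by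
    intro y x
    rw [hφ, clarkeD_neg_eq hh hch, neg_sub]
    ring
  have h2 : ∀ x, φ x x = f x := by
    intro x; rw [key, sub_self, ddir_zero, hfdef]; ring
  refine ⟨?_, h2, ?_, ?_, ?_⟩
  · -- convexity in y
    intro x
    have hrw : (fun y => φ y x) = fun y => (g y + (- h x)) + ddir h x (x - y) := by
      funext y; rw [key]; ring
    rw [hrw]
    apply ConvexOn.add
    · exact hg.add (convexOn_const _ convex_univ)
    · refine ⟨convex_univ, ?_⟩
      intro y1 _ y2 _ a b ha hb hab
      have hx : a • x + b • x = x := by rw [← add_smul, hab, one_smul]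
      have hsub : a • (x - y1) + b • (x - y2) = (a • x + b • x) - (a • y1 + b • y2) := by
        module
      rw [hx] at hsub
      simp only [smul_eq_mul]
      calc ddir h x (x - (a • y1 + b • y2)) = ddir h x (a • (x - y1) + b • (x - y2)) := by
            rw [hsub]
        _ ≤ a * ddir h x (x - y1) + b * ddir h x (x - y2) := ddir_convex hh x _ _ ha hb hab
  · -- subdifferential inclusion
    intro x p hp
    have hp' : ∀ v, (inner ℝ p v : ℝ) ≤ (g (x + v) - g x) + ddir h x (-v) := by
      intro v
      have hpy := hp (x + v)
      simp only at hpy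
      rw [key, key, sub_self, ddir_zero] at hpy
      have hxv : x + v - x = v := by abel
      have hxv2 : x - (x + v) = -v := by abel
      rw [hxv, hxv2] at hpy
      linarith
    have hp2 : ∀ d, (inner ℝ p d : ℝ) ≤ ddir g x d + ddir h x (-d) := by
      intro d
      apply le_of_forall_pos_le_add
      intro ε hε
      obtain ⟨t, ht0, ht1, hlt⟩ := exists_dq_lt g x d hε
      have h3 := hp' (t • d)
      rw [real_inner_smul_right] at h3
      have h4 : ddir h x (-(t • d)) = t * ddir h x (-d) := by
        rw [show -(t • d) = t • (-d) by module]
        exact ddir_smul hh x _ ht0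
      rw [h4] at h3
      have h5 : (inner ℝ p d : ℝ) ≤ dq g x d t + ddir h x (-d) := by
        rw [dq, ← sub_le_iff_le_add, le_div_iff₀ ht0]
        nlinarith [h3]
      linarith
    intro d
    by_cases hd : d = 0
    · subst hd
      rw [inner_zero_right]
      have hz : clarkeD f x 0 = 0 := by
        rw [clarkeD]
        have hfn : (fun p : EuclideanSpace ℝ (Fin n) × ℝ =>
            (f (p.1 + p.2 • (0 : EuclideanSpace ℝ (Fin n))) - f p.1)/p.2) = fun _ => (0:ℝ) := by
          funext p; simp
        rw [hfn, Filter.limsup_const]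
      rw [hz]
    · obtain ⟨a, hale, had⟩ := exists_subgrad_s9 hg x hd
      obtain ⟨b, hble, hbd⟩ := exists_subgrad_s9 hh x (neg_ne_zero.2 hd)
      have hamem : a ∈ convexSubdiff g x := by
        intro y
        have h6 := (hale (y - x)).trans (ddir_le_sub hg x (y - x))
        have hxy : x + (y - x) = y := by abel
        rw [hxy] at h6; linarith
      have hbmem : b ∈ convexSubdiff h x := by
        intro y
        have h6 := (hble (y - x)).trans (ddir_le_sub hh x (y - x))
        have hxy : x + (y - x) = y := by abel
        rw [hxy] at h6; linarith
      have habmem : a - b ∈ clarkeSubdiff f x := by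
        rw [hDC]; exact ⟨a, hamem, b, hbmem, rfl⟩
      calc (inner ℝ p d : ℝ) ≤ ddir g x d + ddir h x (-d) := hp2 d
        _ = inner ℝ a d + inner ℝ b (-d) := by rw [had, hbd]
        _ = (inner ℝ (a - b) d : ℝ) := by rw [inner_sub_left, inner_neg_right]; ring
        _ ≤ clarkeD f x d := habmem d
  · -- the ε-model inequality
    intro x xk yk hxk hyk
    refine ⟨fun _ => 0, fun k => le_refl 0, tendsto_const_nhds, ?_⟩
    intro k
    rw [key, hfdef]
    have h6 := sub_le_ddir hh (xk k) (yk k)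
    simp only [zero_mul, add_zero]
    linarith
  · -- upper semicontinuity
    intro x y xk yk hxk hyk
    set u := fun k => φ (yk k) (xk k) with hudef
    have hcf : Continuous f := by
      have hfeq : f = fun z => g z - h z := funext hfdef
      rw [hfeq]; exact hcg.sub hch
    have hlow : ∀ k, f (yk k) ≤ u k := by
      intro k
      have hk : u k = φ (yk k) (xk k) := rfl
      rw [hk, hfdef, key]
      have h6 := sub_le_ddir hh (xk k) (yk k)
      linarith
    have hfy : Filter.Tendsto (fun k => f (yk k)) Filter.atTop (𝓝 (f y)) :=
      (hcf.tendsto y).comp hyk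
    have hcob : Filter.IsCoboundedUnder (· ≤ ·) Filter.atTop u := by
      apply Filter.IsCoboundedUnder.of_frequently_ge (a := f y - 1)
      apply Filter.Eventually.frequently
      filter_upwards [hfy.eventually (eventually_ge_nhds (by linarith : f y - 1 < f y))] with k hk
      exact le_trans hk (hlow k)
    apply le_of_forall_pos_le_add
    intro ε hε
    refine Filter.limsup_le_of_le hcob ?_
    obtain ⟨t, ht0, ht1, hlt⟩ := exists_dq_lt h x (x - y) (half_pos hε)
    have hub : ∀ k, u k ≤ g (yk k) - h (xk k) + dq h (xk k) (xk k - yk k) t := by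
      intro k
      have hk : u k = φ (yk k) (xk k) := rfl
      rw [hk, key]
      have h6 := ddir_le_dq hh (xk k) (xk k - yk k) ht0
      linarith
    have hU : Filter.Tendsto (fun k => g (yk k) - h (xk k) + dq h (xk k) (xk k - yk k) t)
        Filter.atTop (𝓝 (g y - h x + dq h x (x - y) t)) := by
      have h1 : Filter.Tendsto (fun k => g (yk k)) Filter.atTop (𝓝 (g y)) :=
        (hcg.tendsto y).comp hyk
      have hhxk : Filter.Tendsto (fun k => h (xk k)) Filter.atTop (𝓝 (h x)) :=
        (hch.tendsto x).comp hxk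
      have h3 : Filter.Tendsto (fun k => xk k + t • (xk k - yk k)) Filter.atTop
          (𝓝 (x + t • (x - y))) := hxk.add ((hxk.sub hyk).const_smul t)
      have h4 : Filter.Tendsto (fun k => h (xk k + t • (xk k - yk k))) Filter.atTop
          (𝓝 (h (x + t • (x - y)))) := (hch.tendsto _).comp h3
      have h5 : Filter.Tendsto (fun k => (h (xk k + t • (xk k - yk k)) - h (xk k))/t)
          Filter.atTop (𝓝 ((h (x + t • (x - y)) - h x)/t)) := (h4.sub hhxk).div_const t
      simpa [dq] using (h1.sub hhxk).add h5
    have hend : g y - h x + dq h x (x - y) t ≤ φ y x + ε := by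
      rw [key]; linarith
    filter_upwards [hU.eventually (eventually_le_nhds (by
      rw [key]; linarith : g y - h x + dq h x (x - y) t < φ y x + ε))] with k hk
    exact (hub k).trans hk
end

section
/- Let C ⊆ ℝⁿ be closed convex, x ∈ C, φ : ℝⁿ → ℝ convex with φ(x) = f(x), Q ⪰ 0 symmetric, R > 0, and let y* minimize Φ(y) = φ(y) + ½(y-x)ᵀQ(y-x) over C ∩ B(x,R) where B(x,R) is the ball of radius R for a norm ‖·‖. Let g* ∈ ∂(φ + i_C)(y*) and v in the normal cone of B(x,R) at y* satisfy g* + Q(y* - x) + v = 0. Then f(x) - φ(y*) ≥ σ‖g* + Q(y* - x)‖·‖y* - x‖, where σ = ε² and ε > 0 is any constant such that the Euclidean ball of radius ε is contained in the ‖·‖-unit ball. -/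
open Metric

theorem stmt11 {n : ℕ}
    -- the trust-region norm `N`
    (N : EuclideanSpace ℝ (Fin n) → ℝ)
    (hN_smul : ∀ (a : ℝ) (x : EuclideanSpace ℝ (Fin n)), N (a • x) = |a| * N x)
    (hN_add : ∀ x y : EuclideanSpace ℝ (Fin n), N (x + y) ≤ N x + N y)
    (hN_def : ∀ x : EuclideanSpace ℝ (Fin n), N x = 0 ↔ x = 0)
    (ε : ℝ) (hε : 0 < ε)
    (hball : ∀ u : EuclideanSpace ℝ (Fin n), ‖u‖ ≤ ε → N u ≤ 1)
    -- data
    (C : Set (EuclideanSpace ℝ (Fin n))) (hC : Convex ℝ C) (hCcl : IsClosed C)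
    (x : EuclideanSpace ℝ (Fin n)) (hx : x ∈ C)
    (f φ : EuclideanSpace ℝ (Fin n) → ℝ) (hφconv : ConvexOn ℝ Set.univ φ)
    (hφx : φ x = f x)
    (Q : EuclideanSpace ℝ (Fin n) →ₗ[ℝ] EuclideanSpace ℝ (Fin n))
    (hQsym : ∀ y z, (inner ℝ (Q y) z : ℝ) = (inner ℝ y (Q z) : ℝ))
    (hQpsd : ∀ y, 0 ≤ (inner ℝ (Q y) y : ℝ))
    (R : ℝ) (hR : 0 < R)
    (ystar : EuclideanSpace ℝ (Fin n)) (hystarC : ystar ∈ C) (hystarB : N (ystar - x) ≤ R)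
    (hmin : ∀ y ∈ C, N (y - x) ≤ R →
      φ ystar + (1/2) * (inner ℝ (Q (ystar - x)) (ystar - x) : ℝ) ≤
        φ y + (1/2) * (inner ℝ (Q (y - x)) (y - x) : ℝ))
    (gstar v : EuclideanSpace ℝ (Fin n))
    -- `g* ∈ ∂(φ + i_C)(y*)`
    (hgstar : ∀ y ∈ C, φ ystar + (inner ℝ gstar (y - ystar) : ℝ) ≤ φ y)
    -- `v` in the normal cone to `B(x,R)` at `y*`
    (hv : ∀ u : EuclideanSpace ℝ (Fin n), N (u - x) ≤ R → 0 ≤ (inner ℝ v (ystar - u) : ℝ))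
    (hopt : gstar + Q (ystar - x) + v = 0) :
    f x - φ ystar ≥ ε^2 * N (gstar + Q (ystar - x)) * N (ystar - x) := by

  set d := ystar - x with hd
  have hN0 : N 0 = 0 := (hN_def 0).mpr rfl
  have hNnonneg : ∀ u, 0 ≤ N u := by
    intro u
    have h1 := hN_add u (-u)
    have h2 : N (-u) = N u := by simpa using hN_smul (-1) u
    simp only [add_neg_cancel, hN0] at h1
    linarith
  have hNle : ∀ u : EuclideanSpace ℝ (Fin n), ε * N u ≤ ‖u‖ := by
    intro u
    by_cases hu : u = 0
    · simp [hu, hN0]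
    · have hnorm : 0 < ‖u‖ := norm_pos_iff.mpr hu
      have hb := hball ((ε / ‖u‖) • u) (by
        rw [norm_smul, Real.norm_eq_abs, abs_of_pos (by positivity), div_mul_cancel₀ _ hnorm.ne'])
      rw [hN_smul, abs_of_pos (by positivity), div_mul_eq_mul_div, div_le_one hnorm] at hb
      linarith
  have hg : gstar = -(Q d + v) := by
    have h := hopt
    rw [add_assoc] at h
    exact eq_neg_of_add_eq_zero_left h
  have hmain : f x - φ ystar ≥ (inner ℝ (Q d) d : ℝ) + (inner ℝ v d : ℝ) := by
    have h := hgstar x hx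
    have h2 : (inner ℝ gstar (x - ystar) : ℝ) = -(inner ℝ gstar d : ℝ) := by
      rw [hd, ← neg_sub, inner_neg_right]
    have h3 : (inner ℝ gstar d : ℝ) = -((inner ℝ (Q d) d : ℝ) + (inner ℝ v d : ℝ)) := by
      rw [hg]
      simp [inner_add_left]
    rw [h2, h3] at h
    linarith
  have hvd0 : 0 ≤ (inner ℝ v d : ℝ) := hv x (by simp [hN0, hR.le])
  rcases eq_or_ne v 0 with hv0 | hv0
  · have hG : gstar + Q d = 0 := by
      have := hopt; rw [hv0, add_zero] at this; exact this
    rw [hG, hN0]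
    have := hQpsd d
    nlinarith
  · have hnv : 0 < ‖v‖ := norm_pos_iff.mpr hv0
    have hcoef : 0 ≤ ε * R / ‖v‖ := by positivity
    have hNu : N (x + (ε * R / ‖v‖) • v - x) ≤ R := by
      rw [add_sub_cancel_left, hN_smul, abs_of_nonneg hcoef]
      have h1 : ε * N v ≤ ‖v‖ := hNle v
      rw [div_mul_eq_mul_div, div_le_iff₀ hnv]
      nlinarith [hNnonneg v, hR.le, hε.le]
    have hvu := hv _ hNu
    have hinner : (inner ℝ v (ystar - (x + (ε * R / ‖v‖) • v)) : ℝ)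
        = (inner ℝ v d : ℝ) - (ε * R / ‖v‖) * ‖v‖^2 := by
      rw [sub_add_eq_sub_sub, ← hd, inner_sub_right, real_inner_smul_right,
        real_inner_self_eq_norm_sq]
    have hvd : ε * R * ‖v‖ ≤ (inner ℝ v d : ℝ) := by
      rw [hinner] at hvu
      have hc : (ε * R / ‖v‖) * ‖v‖^2 = ε * R * ‖v‖ := by
        field_simp
      linarith [hvu, hc.symm ▸ hvu]
    have hGv : N (gstar + Q d) = N v := by
      have h : gstar + Q d = -v := eq_neg_of_add_eq_zero_left hopt
      rw [h]
      simpa using hN_smul (-1) v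
    rw [hGv]
    have h2 : ε * N v ≤ ‖v‖ := hNle v
    have h3 : N d ≤ R := hystarB
    nlinarith [hQpsd d, hNnonneg v, hNnonneg d, hε.le,
      mul_nonneg (mul_nonneg (sq_nonneg ε) (hNnonneg v)) (sub_nonneg.mpr h3),
      mul_le_mul_of_nonneg_right h2 (mul_nonneg hε.le hR.le)]
end

section
/- Consider the inner-loop recursion of the bundle trust-region method with Q ≻ 0 and fixed radius R: at step k, yᵏ minimizes Φₖ(y) = φₖ(y) + ½|y - x|_Q² over C ∩ B(x,R), the aggregate plane m*ₖ(y) = φₖ(yᵏ) + gₖ*ᵀ(y - yᵏ) (with gₖ* the aggregate subgradient, satisfying gₖ* + Q(yᵏ - x) = -vₖ, vₖ in the normal cone to B(x,R) at yᵏ) satisfies m*ₖ ≤ φₖ₊₁, and all φₖ ≤ φ with φ(x) = f(x), φₖ₊₁(x) = f(x). Then the sequence Φₖ(yᵏ) is nondecreasing and bounded above by f(x); in particular Φₖ(yᵏ) ≤ Φₖ₊₁(yᵏ⁺¹) ≤ f(x) for all k, and consequently |yᵏ⁺¹ - yᵏ|_Q → 0. -/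
open Filter Topology Metric

theorem stmt15 {n : ℕ}
    -- the trust-region norm `N`
    (N : EuclideanSpace ℝ (Fin n) → ℝ)
    (hN_smul : ∀ (a : ℝ) (x : EuclideanSpace ℝ (Fin n)), N (a • x) = |a| * N x)
    (hN_add : ∀ x y : EuclideanSpace ℝ (Fin n), N (x + y) ≤ N x + N y)
    (hN_def : ∀ x : EuclideanSpace ℝ (Fin n), N x = 0 ↔ x = 0)
    -- data
    (C : Set (EuclideanSpace ℝ (Fin n))) (hC : Convex ℝ C) (hCcl : IsClosed C)
    (x : EuclideanSpace ℝ (Fin n)) (hx : x ∈ C) (R : ℝ) (hR : 0 < R)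
    (f : EuclideanSpace ℝ (Fin n) → ℝ)
    -- `Q ≻ 0` symmetric
    (Q : EuclideanSpace ℝ (Fin n) →ₗ[ℝ] EuclideanSpace ℝ (Fin n))
    (hQsym : ∀ y z, (inner ℝ (Q y) z : ℝ) = (inner ℝ y (Q z) : ℝ))
    (hQpd : ∀ u : EuclideanSpace ℝ (Fin n), u ≠ 0 → 0 < (inner ℝ (Q u) u : ℝ))
    -- convex working models and envelope model
    (φ : ℕ → EuclideanSpace ℝ (Fin n) → ℝ) (φenv : EuclideanSpace ℝ (Fin n) → ℝ)
    (hφconv : ∀ k, ConvexOn ℝ Set.univ (φ k))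
    (hφle : ∀ k u, φ k u ≤ φenv u)
    (hφenvx : φenv x = f x) (hφx : ∀ k, φ k x = f x)
    -- second-order working models
    (Φ : ℕ → EuclideanSpace ℝ (Fin n) → ℝ)
    (hΦ : ∀ k u, Φ k u = φ k u + (1/2) * (inner ℝ (Q (u - x)) (u - x) : ℝ))
    -- the iterates `yᵏ` minimize `Φₖ` over `C ∩ B(x,R)`
    (y : ℕ → EuclideanSpace ℝ (Fin n))
    (hyC : ∀ k, y k ∈ C) (hyB : ∀ k, N (y k - x) ≤ R)
    (hymin : ∀ k, ∀ u ∈ C, N (u - x) ≤ R → Φ k (y k) ≤ Φ k u)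
    -- aggregate subgradients and optimality
    (gstar v : ℕ → EuclideanSpace ℝ (Fin n))
    (hgstar : ∀ k, ∀ u ∈ C, φ k (y k) + (inner ℝ (gstar k) (u - y k) : ℝ) ≤ φ k u)
    (hopt : ∀ k, gstar k + Q (y k - x) = -(v k))
    (hv : ∀ k, ∀ u : EuclideanSpace ℝ (Fin n), N (u - x) ≤ R →
      0 ≤ (inner ℝ (v k) (y k - u) : ℝ))
    -- the aggregate plane is dominated by the next working model
    (hagg : ∀ k u, φ k (y k) + (inner ℝ (gstar k) (u - y k) : ℝ) ≤ φ (k+1) u) :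
    Monotone (fun k => Φ k (y k)) ∧
    (∀ k, Φ k (y k) ≤ f x) ∧
    Filter.Tendsto
      (fun k => Real.sqrt (inner ℝ (Q (y (k+1) - y k)) (y (k+1) - y k) : ℝ))
      Filter.atTop (𝓝 0) := by

  have hN0 : N 0 = 0 := (hN_def 0).mpr rfl
  have hQ0 : ∀ u : EuclideanSpace ℝ (Fin n), 0 ≤ (inner ℝ (Q u) u : ℝ) := by
    intro u
    rcases eq_or_ne u 0 with h | h
    · simp [h]
    · exact (hQpd u h).le
  -- key inequality: Φₖ(yᵏ) + ½|yᵏ⁺¹-yᵏ|_Q² ≤ Φₖ₊₁(yᵏ⁺¹)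
  have key : ∀ k, Φ k (y k) + (1/2) * (inner ℝ (Q (y (k+1) - y k)) (y (k+1) - y k) : ℝ)
      ≤ Φ (k+1) (y (k+1)) := by
    intro k
    set d := y k - x with hd
    set w := y (k+1) - y k with hw
    have hdw : y (k+1) - x = d + w := by rw [hd, hw]; abel
    have expand : (inner ℝ (Q (d + w)) (d + w) : ℝ)
        = (inner ℝ (Q d) d : ℝ) + 2 * (inner ℝ (Q d) w : ℝ) + (inner ℝ (Q w) w : ℝ) := by
      have hsym : (inner ℝ (Q w) d : ℝ) = (inner ℝ (Q d) w : ℝ) := by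
        rw [hQsym w d, real_inner_comm]
      simp only [map_add, inner_add_left, inner_add_right]
      rw [hsym]; ring
    have hvk : (0 : ℝ) ≤ inner ℝ (v k) (y k - y (k+1)) := hv k (y (k+1)) (hyB (k+1))
    have hoptk : (inner ℝ (gstar k) w : ℝ) + (inner ℝ (Q d) w : ℝ)
        = inner ℝ (v k) (y k - y (k+1)) := by
      have h1 : (inner ℝ (gstar k + Q d) w : ℝ) = inner ℝ (-(v k)) w := by rw [hopt k]
      have h2 : (inner ℝ (-(v k)) w : ℝ) = inner ℝ (v k) (y k - y (k+1)) := by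
        rw [inner_neg_left, ← inner_neg_right]
        congr 1
        rw [hw]; abel
      rw [inner_add_left] at h1
      linarith [h1, h2]
    have haggk := hagg k (y (k+1))
    have hdd : (inner ℝ (Q (y k - x)) (y k - x) : ℝ) = inner ℝ (Q d) d := rfl
    rw [hΦ k (y k), hΦ (k+1) (y (k+1)), hdw, expand, hdd]
    linarith [haggk, hvk, hoptk]
  have hmono : Monotone (fun k => Φ k (y k)) := by
    apply monotone_nat_of_le_succ
    intro k
    have := key k
    have h0 := hQ0 (y (k+1) - y k)
    simp only [ge_iff_le]
    linarith
  have hbound : ∀ k, Φ k (y k) ≤ f x := by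
    intro k
    have hxB : N (x - x) ≤ R := by simp [hN0, hR.le]
    have := hymin k x hx hxB
    have hΦx : Φ k x = f x := by
      rw [hΦ k x]
      simp [hφx k]
    linarith [this, hΦx.le, hΦx.ge]
  refine ⟨hmono, hbound, ?_⟩
  -- convergence
  have hbdd : BddAbove (Set.range fun k => Φ k (y k)) := by
    refine ⟨f x, ?_⟩
    rintro _ ⟨k, rfl⟩
    exact hbound k
  have hconv := tendsto_atTop_ciSup hmono hbdd
  have h1 : Filter.Tendsto (fun k => Φ (k+1) (y (k+1))) Filter.atTop
      (𝓝 (⨆ k, Φ k (y k))) := hconv.comp (tendsto_add_atTop_nat 1)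
  have hdiff : Filter.Tendsto (fun k => Φ (k+1) (y (k+1)) - Φ k (y k))
      Filter.atTop (𝓝 0) := by
    simpa using h1.sub hconv
  have hq : Filter.Tendsto (fun k => (inner ℝ (Q (y (k+1) - y k)) (y (k+1) - y k) : ℝ))
      Filter.atTop (𝓝 0) := by
    have hub : Filter.Tendsto (fun k => 2 * (Φ (k+1) (y (k+1)) - Φ k (y k)))
        Filter.atTop (𝓝 0) := by
      simpa using hdiff.const_mul 2
    refine squeeze_zero (fun k => hQ0 _) (fun k => ?_) hub
    have := key k
    linarith
  have := (Real.continuous_sqrt.tendsto 0).comp hq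
  simpa [Function.comp_def] using this
end

section
/- Define f : [0,1] → ℝ piecewise linearly with slopes ±1 via the recursion t₁ = 1, t₂ₖ₊₁ = t₂ₖ - t₂ₖ², t₂ₖ = (√(1 + 4t₂ₖ₋₁) - 1)/2, with f(t₂ₖ) = t₂ₖ², f(t₂ₖ₊₁) = 0, slope -1 on [t₂ₖ, t₂ₖ₋₁] and slope +1 on [t₂ₖ₊₁, t₂ₖ], extended by f(0) = 0. Then f is differentiable at 0 with f'(0) = 0, but the Clarke subdifferential satisfies ∂f(0) = [-1, 1]; in particular f is not strictly differentiable at 0. -/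
open Filter Topology Set

/-- Clarke generalized directional derivative for a function on `ℝ`. -/
noncomputable def clarkeD1 (f : ℝ → ℝ) (x d : ℝ) : ℝ :=
  Filter.limsup (fun p : ℝ × ℝ => (f (p.1 + p.2 * d) - f p.1) / p.2)
    ((𝓝 x) ×ˢ (𝓝[>] (0 : ℝ)))

/-- Clarke subdifferential for a function on `ℝ`. -/
def clarkeSubdiff1 (f : ℝ → ℝ) (x : ℝ) : Set ℝ :=
  {g | ∀ d, g * d ≤ clarkeD1 f x d}

theorem stmt16 (f : ℝ → ℝ) (t : ℕ → ℝ)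
    (hLip : LipschitzWith 1 f)
    (ht1 : t 1 = 1)
    (hteven : ∀ k, 1 ≤ k → t (2*k) = (Real.sqrt (1 + 4 * t (2*k - 1)) - 1) / 2)
    (htodd : ∀ k, 1 ≤ k → t (2*k+1) = t (2*k) - (t (2*k))^2)
    (htpos : ∀ k, 1 ≤ k → 0 < t k)
    (htdec : ∀ k, 1 ≤ k → t (k+1) < t k)
    (ht0 : Filter.Tendsto t Filter.atTop (𝓝 0))
    (hf0 : f 0 = 0)
    (hfeven : ∀ k, 1 ≤ k → f (t (2*k)) = (t (2*k))^2)
    (hfodd : ∀ k, 1 ≤ k → f (t (2*k+1)) = 0)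
    -- slope `-1` on `[t₂ₖ, t₂ₖ₋₁]`
    (hslopeNeg : ∀ k, 1 ≤ k → ∀ s ∈ Set.Icc (t (2*k)) (t (2*k-1)),
      f s = (t (2*k))^2 - (s - t (2*k)))
    -- slope `+1` on `[t₂ₖ₊₁, t₂ₖ]`
    (hslopePos : ∀ k, 1 ≤ k → ∀ s ∈ Set.Icc (t (2*k+1)) (t (2*k)),
      f s = s - t (2*k+1))
    -- symmetric extension to the left of `0`
    (hsymm : ∀ s : ℝ, f (-s) = f s) :
    HasDerivAt f 0 0 ∧
    clarkeSubdiff1 f 0 = Set.Icc (-1 : ℝ) 1 ∧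
    ¬ HasStrictDerivAt f 0 0 := by
  classical
  -- t is antitone on indices ≥ 1
  have hmono : ∀ m n : ℕ, 1 ≤ m → m ≤ n → t n ≤ t m := by
    intro m n hm hmn
    induction n with
    | zero => interval_cases m <;> omega
    | succ n ih =>
      rcases Nat.lt_or_ge m (n+1) with h | h
      · have h1 : 1 ≤ n := by omega
        have h2 := htdec n h1
        have h3 := ih (by omega)
        linarith
      · have : m = n + 1 := by omega
        rw [this]
  -- key identity: t (2k-1) = t (2k) + t (2k)^2
  have key : ∀ k : ℕ, 1 ≤ k → t (2*k-1) = t (2*k) + (t (2*k))^2 := by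
    intro k hk
    have h := hteven k hk
    have hpos : 0 < t (2*k-1) := htpos _ (by omega)
    have h5 : (0:ℝ) ≤ 1 + 4 * t (2*k-1) := by linarith
    have hsq := Real.sq_sqrt h5
    have heq : Real.sqrt (1 + 4 * t (2*k-1)) = 2 * t (2*k) + 1 := by
      rw [h]; ring
    rw [heq] at hsq
    nlinarith [hsq]
  -- f vanishes at odd-indexed points t(2k-1)
  have hfo : ∀ k : ℕ, 1 ≤ k → f (t (2*k-1)) = 0 := by
    intro k hk
    have hkey := key k hk
    have hlt : t (2*k) < t (2*k-1) := by
      have := htdec (2*k-1) (by omega)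
      have e : 2*k-1+1 = 2*k := by omega
      rw [e] at this
      linarith
    have hmem : t (2*k-1) ∈ Icc (t (2*k)) (t (2*k-1)) := ⟨hlt.le, le_rfl⟩
    rw [hslopeNeg k hk _ hmem]
    linarith
  -- t 2 value and bound
  have ht2 : t 2 = (Real.sqrt 5 - 1) / 2 := by
    have h2 := hteven 1 le_rfl
    norm_num [ht1] at h2
    exact h2
  have hsqrt5 : Real.sqrt 5 < 2.25 := by
    nlinarith [Real.sq_sqrt (show (0:ℝ) ≤ 5 by norm_num), Real.sqrt_nonneg 5]
  have ht2lt : t 2 < 0.625 := by rw [ht2]; linarith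
  -- fundamental bound: 0 ≤ f s ≤ 8 s² on (0,1]
  have bound : ∀ s : ℝ, 0 < s → s ≤ 1 → 0 ≤ f s ∧ f s ≤ 8 * s^2 := by
    intro s hs hs1
    have hex : ∃ n : ℕ, 1 ≤ n ∧ t (n+1) < s := by
      have hev : ∀ᶠ n in atTop, t n < s := ht0.eventually_lt_const hs
      obtain ⟨N, hN⟩ := eventually_atTop.mp hev
      exact ⟨max N 1, le_max_right _ _, hN _ (by omega)⟩
    set m := Nat.find hex with hmdef
    obtain ⟨hm1, hms⟩ := Nat.find_spec hex
    have hsm : s ≤ t m := by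
      rcases Nat.lt_or_ge 1 m with h | h
      · have hmin := Nat.find_min hex (show m - 1 < m by omega)
        rw [show m - 1 + 1 = m by omega] at hmin
        push_neg at hmin
        exact hmin (by omega)
      · have : m = 1 := by omega
        rw [this, ht1]; exact hs1
    rcases Nat.even_or_odd m with ⟨k, hk⟩ | ⟨k, hk⟩
    · -- m = 2k : s ∈ [t(2k+1), t(2k)], increasing piece
      have hk1 : 1 ≤ k := by omega
      have e1 : m = 2*k := by omega
      have e2 : m + 1 = 2*k+1 := by omega
      rw [e2] at hms; rw [e1] at hsm
      have hmem : s ∈ Icc (t (2*k+1)) (t (2*k)) := ⟨hms.le, hsm⟩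
      have hfs : f s = s - t (2*k+1) := hslopePos k hk1 s hmem
      have hodd := htodd k hk1
      have hbpos : 0 < t (2*k) := htpos _ (by omega)
      have hble : t (2*k) ≤ t 2 := hmono 2 (2*k) (by norm_num) (by omega)
      have hblt : t (2*k) < 0.625 := lt_of_le_of_lt hble ht2lt
      constructor
      · linarith
      · -- f s ≤ t(2k)^2 ≤ 8 s²
        have h1 : f s ≤ (t (2*k))^2 := by rw [hfs]; linarith
        have h2 : (0.375 : ℝ) * t (2*k) ≤ s := by nlinarith
        nlinarith [mul_le_mul h2 h2 (by positivity) hs.le]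
    · -- m = 2k+1 = 2(k+1)-1 : s ∈ [t(2j), t(2j-1)], decreasing piece
      set j := k + 1 with hjdef
      have hj1 : 1 ≤ j := by omega
      have e1 : m = 2*j-1 := by omega
      have e2 : m + 1 = 2*j := by omega
      rw [e2] at hms; rw [e1] at hsm
      have hmem : s ∈ Icc (t (2*j)) (t (2*j-1)) := ⟨hms.le, hsm⟩
      have hfs : f s = (t (2*j))^2 - (s - t (2*j)) := hslopeNeg j hj1 s hmem
      have hkey := key j hj1
      have hbpos : 0 < t (2*j) := htpos _ (by omega)
      constructor
      · rw [hfs]; linarith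
      · have h1 : f s ≤ (t (2*j))^2 := by rw [hfs]; linarith
        nlinarith
  -- absolute bound near 0
  have habs : ∀ s : ℝ, |s| ≤ 1 → |f s| ≤ 8 * s^2 := by
    intro s hs
    rcases lt_trichotomy s 0 with h | h | h
    · have hsym := hsymm (-s)
      rw [neg_neg] at hsym
      have hneg : 0 < -s := by linarith
      have hb := bound (-s) hneg (by rwa [abs_of_neg h] at hs)
      rw [hsym, abs_of_nonneg hb.1]
      calc f (-s) ≤ 8 * (-s)^2 := hb.2
        _ = 8 * s^2 := by ring
    · rw [h, hf0]; simp
    · have hb := bound s h (by rwa [abs_of_pos h] at hs)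
      rw [abs_of_nonneg hb.1]; exact hb.2
  -- Part 1: HasDerivAt f 0 0
  have hderiv : HasDerivAt f 0 0 := by
    rw [hasDerivAt_iff_tendsto_slope]
    have h1 : ∀ᶠ s in 𝓝 (0:ℝ), |s| ≤ 1 := by
      filter_upwards [Metric.closedBall_mem_nhds (0:ℝ) one_pos] with s hs
      simpa [Real.dist_eq] using hs
    apply squeeze_zero_norm' (a := fun s : ℝ => 8 * |s|)
    · filter_upwards [nhdsWithin_le_nhds h1, self_mem_nhdsWithin] with s hs hs0
      have hs0' : (s : ℝ) ≠ 0 := hs0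
      rw [slope_def_field, hf0, sub_zero, sub_zero]
      have hfb := habs s hs
      have habs2 : (8:ℝ) * s^2 = 8 * |s| * |s| := by rw [← sq_abs]; ring
      rw [Real.norm_eq_abs, abs_div, div_le_iff₀ (abs_pos.mpr hs0')]
      linarith
    · have h2 : Tendsto (fun s : ℝ => 8 * |s|) (𝓝 0) (𝓝 (8 * |(0:ℝ)|)) :=
        (continuous_const.mul continuous_abs).tendsto 0
      simp only [abs_zero, mul_zero] at h2
      exact h2.mono_left nhdsWithin_le_nhds
  -- Lipschitz estimate
  have hL : ∀ a b : ℝ, |f a - f b| ≤ |a - b| := by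
    intro a b
    have := hLip.dist_le_mul a b
    simpa [Real.dist_eq] using this
  -- auxiliary tendsto facts
  have hnat2 : Tendsto (fun k : ℕ => 2*k) atTop atTop :=
    tendsto_atTop_atTop.mpr (fun b => ⟨b, fun a ha => by omega⟩)
  have hnat21 : Tendsto (fun k : ℕ => 2*k+1) atTop atTop :=
    tendsto_atTop_atTop.mpr (fun b => ⟨b, fun a ha => by omega⟩)
  have hnat2m : Tendsto (fun k : ℕ => 2*k-1) atTop atTop :=
    tendsto_atTop_atTop.mpr (fun b => ⟨b+1, fun a ha => by omega⟩)
  have ht2k : Tendsto (fun k : ℕ => t (2*k)) atTop (𝓝 0) := ht0.comp hnat2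
  have ht2k1 : Tendsto (fun k : ℕ => t (2*k+1)) atTop (𝓝 0) := ht0.comp hnat21
  have ht2km : Tendsto (fun k : ℕ => t (2*k-1)) atTop (𝓝 0) := ht0.comp hnat2m
  -- Part 2: Clarke derivative equals |d|
  have hD : ∀ d : ℝ, clarkeD1 f 0 d = |d| := by
    intro d
    have hmemprod : (univ ×ˢ Ioi (0:ℝ)) ∈ (𝓝 (0:ℝ)) ×ˢ (𝓝[>] (0:ℝ)) :=
      prod_mem_prod univ_mem self_mem_nhdsWithin
    have hub : ∀ᶠ p : ℝ × ℝ in (𝓝 (0:ℝ)) ×ˢ (𝓝[>] (0:ℝ)),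
        (f (p.1 + p.2 * d) - f p.1) / p.2 ≤ |d| := by
      filter_upwards [hmemprod] with p hp
      have hp2 : 0 < p.2 := hp.2
      have := hL (p.1 + p.2 * d) p.1
      have h1 : |p.1 + p.2 * d - p.1| = p.2 * |d| := by
        rw [show p.1 + p.2 * d - p.1 = p.2 * d by ring, abs_mul, abs_of_pos hp2]
      rw [h1] at this
      rw [div_le_iff₀ hp2]
      calc f (p.1 + p.2 * d) - f p.1 ≤ |f (p.1 + p.2 * d) - f p.1| := le_abs_self _
        _ ≤ p.2 * |d| := this
        _ = |d| * p.2 := by ring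
    have hlb : ∀ᶠ p : ℝ × ℝ in (𝓝 (0:ℝ)) ×ˢ (𝓝[>] (0:ℝ)),
        -|d| ≤ (f (p.1 + p.2 * d) - f p.1) / p.2 := by
      filter_upwards [hmemprod] with p hp
      have hp2 : 0 < p.2 := hp.2
      have := hL (p.1 + p.2 * d) p.1
      have h1 : |p.1 + p.2 * d - p.1| = p.2 * |d| := by
        rw [show p.1 + p.2 * d - p.1 = p.2 * d by ring, abs_mul, abs_of_pos hp2]
      rw [h1] at this
      rw [le_div_iff₀ hp2]
      have h2 : -(p.2 * |d|) ≤ f (p.1 + p.2 * d) - f p.1 := neg_le_of_abs_le this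
      linarith
    have hcobdd : Filter.IsCoboundedUnder (· ≤ ·) ((𝓝 (0:ℝ)) ×ˢ (𝓝[>] (0:ℝ)))
        (fun p : ℝ × ℝ => (f (p.1 + p.2 * d) - f p.1) / p.2) :=
      Filter.IsBoundedUnder.isCoboundedUnder_le
        (Filter.isBoundedUnder_of_eventually_ge hlb)
    have hbdd : Filter.IsBoundedUnder (· ≤ ·) ((𝓝 (0:ℝ)) ×ˢ (𝓝[>] (0:ℝ)))
        (fun p : ℝ × ℝ => (f (p.1 + p.2 * d) - f p.1) / p.2) :=
      Filter.isBoundedUnder_of_eventually_le hub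
    have hle : clarkeD1 f 0 d ≤ |d| := Filter.limsup_le_of_le hcobdd hub
    have hge : |d| ≤ clarkeD1 f 0 d := by
      unfold clarkeD1
      rcases lt_trichotomy d 0 with hd | hd | hd
      · -- use decreasing pieces
        have hd' : d ≠ 0 := hd.ne
        have hu2 : Tendsto (fun k : ℕ => (t (2*k))^2 / (-d)) atTop (𝓝[>] (0:ℝ)) := by
          rw [tendsto_nhdsWithin_iff]
          constructor
          · have h1 : Tendsto (fun k : ℕ => (t (2*k))^2) atTop (𝓝 0) := by
              have := ht2k.pow 2
              simpa using this
            have h2 := h1.div_const (-d)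
            simpa using h2
          · filter_upwards [eventually_ge_atTop 1] with k hk
            have := htpos (2*k) (by omega)
            exact div_pos (pow_pos this 2) (neg_pos.mpr hd)
        have htu : Tendsto (fun k : ℕ => ((t (2*k-1), (t (2*k))^2 / (-d)) : ℝ × ℝ))
            atTop ((𝓝 (0:ℝ)) ×ˢ (𝓝[>] (0:ℝ))) := by
          rw [Filter.tendsto_prod_iff']
          exact ⟨ht2km, hu2⟩
        apply Filter.le_limsup_of_frequently_le _ hbdd
        apply htu.frequently
        apply Filter.Eventually.frequently
        filter_upwards [eventually_ge_atTop 1] with k hk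
        have hbpos : 0 < t (2*k) := htpos _ (by omega)
        have hb2 : 0 < (t (2*k))^2 := by positivity
        have hkey := key k hk
        show |d| ≤ (f (t (2*k-1) + (t (2*k))^2 / (-d) * d) - f (t (2*k-1))) / ((t (2*k))^2 / (-d))
        have hmul : (t (2*k))^2 / (-d) * d = -(t (2*k))^2 := by
          field_simp [hd.ne]
        have harg : t (2*k-1) + (t (2*k))^2 / (-d) * d = t (2*k) := by
          rw [hmul]; linarith
        rw [harg, hfeven k hk, hfo k hk, sub_zero,
          div_div_eq_mul_div, mul_comm, mul_div_assoc, div_self hb2.ne', mul_one,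
          abs_of_neg hd]
      · subst hd
        simp only [abs_zero]
        apply Filter.le_limsup_of_frequently_le _ hbdd
        apply Filter.Eventually.frequently
        filter_upwards [hmemprod] with p hp
        simp
      · -- use increasing pieces
        have hd' : d ≠ 0 := hd.ne'
        have hu2 : Tendsto (fun k : ℕ => (t (2*k))^2 / d) atTop (𝓝[>] (0:ℝ)) := by
          rw [tendsto_nhdsWithin_iff]
          constructor
          · have h1 : Tendsto (fun k : ℕ => (t (2*k))^2) atTop (𝓝 0) := by
              have := ht2k.pow 2
              simpa using this
            have h2 := h1.div_const d
            simpa using h2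
          · filter_upwards [eventually_ge_atTop 1] with k hk
            have := htpos (2*k) (by omega)
            exact div_pos (pow_pos this 2) hd
        have htu : Tendsto (fun k : ℕ => ((t (2*k+1), (t (2*k))^2 / d) : ℝ × ℝ))
            atTop ((𝓝 (0:ℝ)) ×ˢ (𝓝[>] (0:ℝ))) := by
          rw [Filter.tendsto_prod_iff']
          exact ⟨ht2k1, hu2⟩
        apply Filter.le_limsup_of_frequently_le _ hbdd
        apply htu.frequently
        apply Filter.Eventually.frequently
        filter_upwards [eventually_ge_atTop 1] with k hk
        have hbpos : 0 < t (2*k) := htpos _ (by omega)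
        have hb2 : 0 < (t (2*k))^2 := by positivity
        have hodd := htodd k hk
        show |d| ≤ (f (t (2*k+1) + (t (2*k))^2 / d * d) - f (t (2*k+1))) / ((t (2*k))^2 / d)
        have hmul : (t (2*k))^2 / d * d = (t (2*k))^2 := by
          field_simp
        have harg : t (2*k+1) + (t (2*k))^2 / d * d = t (2*k) := by
          rw [hmul]; linarith
        rw [harg, hfeven k hk, hfodd k hk, sub_zero,
          div_div_eq_mul_div, mul_comm, mul_div_assoc, div_self hb2.ne', mul_one,
          abs_of_pos hd]
    linarith
  -- Part 2 conclusion
  have hsub : clarkeSubdiff1 f 0 = Set.Icc (-1 : ℝ) 1 := by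
    ext g
    simp only [clarkeSubdiff1, mem_setOf_eq, mem_Icc]
    constructor
    · intro h
      constructor
      · have := h (-1)
        rw [hD (-1)] at this
        simp at this
        linarith
      · have := h 1
        rw [hD 1] at this
        simp at this
        linarith
    · rintro ⟨h1, h2⟩ d
      rw [hD d]
      calc g * d ≤ |g * d| := le_abs_self _
        _ = |g| * |d| := abs_mul g d
        _ ≤ 1 * |d| := by
            apply mul_le_mul_of_nonneg_right _ (abs_nonneg d)
            exact abs_le.mpr ⟨h1, h2⟩
        _ = |d| := one_mul _
  -- Part 3: not strictly differentiable
  have hnstrict : ¬ HasStrictDerivAt f 0 0 := by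
    intro h
    have hlo := h.isLittleO
    simp only [ContinuousLinearMap.smulRight_apply, ContinuousLinearMap.one_apply,
      ContinuousLinearMap.toSpanSingleton_apply, smul_zero, sub_zero] at hlo
    have hu : Tendsto (fun k : ℕ => ((t (2*k), t (2*k+1)) : ℝ × ℝ)) atTop (𝓝 (0, 0)) :=
      ht2k.prodMk_nhds ht2k1
    have h2 := (hlo.comp_tendsto hu).def (show (0:ℝ) < 1/2 by norm_num)
    obtain ⟨k, hk, hk1⟩ := (h2.and (eventually_ge_atTop 1)).exists
    have hbpos : 0 < t (2*k) := htpos _ (by omega)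
    have hodd := htodd k hk1
    simp only [Function.comp_apply, Prod.fst, Prod.snd, hfeven k hk1,
      hfodd k hk1, sub_zero, Real.norm_eq_abs] at hk
    rw [hodd, show t (2*k) - (t (2*k) - t (2*k)^2) = t (2*k)^2 by ring,
      abs_of_pos (pow_pos hbpos 2)] at hk
    nlinarith
  exact ⟨hderiv, hsub, hnstrict⟩
end

section
/- Let 𝒪 be a cutting plane oracle for a locally Lipschitz f : ℝⁿ → ℝ satisfying axioms (𝒪₁)–(𝒪₄) and bounded on bounded sets, with constant M > 0. Then the envelope function φ(y,x) = sup{a + gᵀ(y - x) : (a,g) ∈ 𝒪(z,x), ‖z - x‖ ≤ M} is finite-valued, convex in y, satisfies φ(x,x) = f(x), and every convex subgradient of φ(·,x) at x belongs to the Clarke subdifferential ∂f(x). -/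
open Filter Topology Metric Bornology

/-- The set of values at `y` of the planes delivered by the oracle near `x`. -/
def planeValues {n : ℕ} (O : EuclideanSpace ℝ (Fin n) → EuclideanSpace ℝ (Fin n) →
    Set (ℝ × EuclideanSpace ℝ (Fin n))) (M : ℝ)
    (y x : EuclideanSpace ℝ (Fin n)) : Set ℝ :=
  {v | ∃ z a g, ‖z - x‖ ≤ M ∧ (a, g) ∈ O z x ∧ v = a + (inner ℝ g (y - x) : ℝ)}

theorem stmt18 {n : ℕ} (f : EuclideanSpace ℝ (Fin n) → ℝ) (hf : LocallyLipschitz f)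
    (O : EuclideanSpace ℝ (Fin n) → EuclideanSpace ℝ (Fin n) →
      Set (ℝ × EuclideanSpace ℝ (Fin n)))
    (M : ℝ) (hM : 0 < M)
    (hne : ∀ z x, (O z x).Nonempty)
    -- bounded on bounded sets
    (hbdd : ∀ s : Set (EuclideanSpace ℝ (Fin n) × EuclideanSpace ℝ (Fin n)),
      IsBounded s → IsBounded (⋃ p ∈ s, O p.1 p.2))
    -- (𝒪₁)
    (hO1a : ∀ z x a g, (a, g) ∈ O z x → a ≤ f x)
    (hO1b : ∀ x, ∃ g ∈ clarkeSubdiff f x, (f x, g) ∈ O x x)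
    -- (𝒪₂)
    (hO2 : ∀ (x : EuclideanSpace ℝ (Fin n)) (z : ℕ → EuclideanSpace ℝ (Fin n))
      (a : ℕ → ℝ) (gs : ℕ → EuclideanSpace ℝ (Fin n)) (g : EuclideanSpace ℝ (Fin n)),
      (∀ j, (a j, gs j) ∈ O (z j) x) → Filter.Tendsto a Filter.atTop (𝓝 (f x)) →
      (∀ j, ‖z j - x‖ ≤ M) → Filter.Tendsto gs Filter.atTop (𝓝 g) →
      g ∈ clarkeSubdiff f x)
    -- (𝒪₃)
    (hO3 : ∀ (x : EuclideanSpace ℝ (Fin n)) (z : ℕ → EuclideanSpace ℝ (Fin n)),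
      Filter.Tendsto z Filter.atTop (𝓝 x) →
      ∃ (a : ℕ → ℝ) (g : ℕ → EuclideanSpace ℝ (Fin n)) (ε : ℕ → ℝ),
        (∀ j, (a j, g j) ∈ O (z j) x) ∧ (∀ j, 0 ≤ ε j) ∧
        Filter.Tendsto ε Filter.atTop (𝓝 0) ∧
        ∀ j, f (z j) ≤ a j + (inner ℝ (g j) (z j - x) : ℝ) + ε j * ‖z j - x‖)
    -- (𝒪₄)
    (hO4 : ∀ (z y x : ℕ → EuclideanSpace ℝ (Fin n))
      (zl yl xl : EuclideanSpace ℝ (Fin n)),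
      Filter.Tendsto z Filter.atTop (𝓝 zl) → Filter.Tendsto y Filter.atTop (𝓝 yl) →
      Filter.Tendsto x Filter.atTop (𝓝 xl) →
      ∀ (a : ℕ → ℝ) (g : ℕ → EuclideanSpace ℝ (Fin n)),
        (∀ j, (a j, g j) ∈ O (z j) (x j)) →
        ∃ z' : EuclideanSpace ℝ (Fin n), ‖z' - xl‖ ≤ M ∧
          ∃ a' g', (a', g') ∈ O z' xl ∧
            Filter.limsup (fun j => a j + (inner ℝ (g j) (y j - x j) : ℝ)) Filter.atTop
              ≤ a' + (inner ℝ g' (yl - xl) : ℝ)) :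
    -- the envelope is finite-valued, convex, exact at `x`, with subgradients in `∂f(x)`
    (∀ x y, (planeValues O M y x).Nonempty ∧ BddAbove (planeValues O M y x)) ∧
    (∀ x, ConvexOn ℝ Set.univ (fun y => sSup (planeValues O M y x))) ∧
    (∀ x, sSup (planeValues O M x x) = f x) ∧
    (∀ x, convexSubdiff (fun y => sSup (planeValues O M y x)) x ⊆ clarkeSubdiff f x) := by
  classical
  -- Bounded oracle union near each x
  have hB : ∀ x : EuclideanSpace ℝ (Fin n),
      IsBounded (⋃ p ∈ (closedBall x M ×ˢ ({x} : Set (EuclideanSpace ℝ (Fin n)))), O p.1 p.2) :=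
    fun x => hbdd _ ((isBounded_closedBall).prod isBounded_singleton)
  have hmemB : ∀ (x z : EuclideanSpace ℝ (Fin n)) (a : ℝ) (g : EuclideanSpace ℝ (Fin n)),
      ‖z - x‖ ≤ M → (a, g) ∈ O z x →
      (a, g) ∈ ⋃ p ∈ (closedBall x M ×ˢ ({x} : Set (EuclideanSpace ℝ (Fin n)))), O p.1 p.2 := by
    intro x z a g hz hm
    have hzx : (z, x) ∈ closedBall x M ×ˢ ({x} : Set (EuclideanSpace ℝ (Fin n))) := by
      simp [Set.mem_prod, mem_closedBall, dist_eq_norm, hz]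
    exact Set.mem_biUnion hzx hm
  -- Part 1
  have h1 : ∀ x y, (planeValues O M y x).Nonempty ∧ BddAbove (planeValues O M y x) := by
    intro x y
    constructor
    · obtain ⟨g0, _, hmem0⟩ := hO1b x
      exact ⟨f x + (inner ℝ g0 (y - x) : ℝ), x, f x, g0, by simp [hM.le], hmem0, rfl⟩
    · obtain ⟨r, hr⟩ := isBounded_iff_forall_norm_le.mp (hB x)
      refine ⟨r + r * ‖y - x‖, ?_⟩
      rintro v ⟨z, a, g, hz, hm, rfl⟩
      have h := hr _ (hmemB x z a g hz hm)
      have ha : |a| ≤ r := le_trans (norm_fst_le ((a, g) : ℝ × EuclideanSpace ℝ (Fin n))) h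
      have hgn : ‖g‖ ≤ r := le_trans (norm_snd_le ((a, g) : ℝ × EuclideanSpace ℝ (Fin n))) h
      have hi : (inner ℝ g (y - x) : ℝ) ≤ ‖g‖ * ‖y - x‖ := real_inner_le_norm g (y - x)
      have h2 : ‖g‖ * ‖y - x‖ ≤ r * ‖y - x‖ :=
        mul_le_mul_of_nonneg_right hgn (norm_nonneg _)
      have := abs_le.mp ha
      linarith
  -- Part 3 (exactness), proved first since it is used in Part 4
  have h3 : ∀ x, sSup (planeValues O M x x) = f x := by
    intro x
    obtain ⟨g0, _, hmem0⟩ := hO1b x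
    have hfx : f x ∈ planeValues O M x x :=
      ⟨x, f x, g0, by simp [hM.le], hmem0, by simp⟩
    refine le_antisymm (csSup_le ⟨_, hfx⟩ ?_) (le_csSup (h1 x x).2 hfx)
    rintro v ⟨z, a, g, hz, hm, rfl⟩
    have : (inner ℝ g (x - x) : ℝ) = 0 := by simp
    rw [this, add_zero]
    exact hO1a z x a g hm
  -- Part 2 (convexity)
  have h2 : ∀ x, ConvexOn ℝ Set.univ (fun y => sSup (planeValues O M y x)) := by
    intro x
    refine ⟨convex_univ, ?_⟩
    intro y1 _ y2 _ θ1 θ2 hθ1 hθ2 hsum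
    refine csSup_le (h1 x _).1 ?_
    rintro v ⟨z, a, g, hz, hm, rfl⟩
    have e1 : a + (inner ℝ g (y1 - x) : ℝ) ≤ sSup (planeValues O M y1 x) :=
      le_csSup (h1 x y1).2 ⟨z, a, g, hz, hm, rfl⟩
    have e2 : a + (inner ℝ g (y2 - x) : ℝ) ≤ sSup (planeValues O M y2 x) :=
      le_csSup (h1 x y2).2 ⟨z, a, g, hz, hm, rfl⟩
    have hxid : θ1 • x + θ2 • x = x := by rw [← add_smul, hsum, one_smul]
    have hvec : θ1 • y1 + θ2 • y2 - x = θ1 • (y1 - x) + θ2 • (y2 - x) := by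
      have e : θ1 • (y1 - x) + θ2 • (y2 - x) = θ1 • y1 + θ2 • y2 - (θ1 + θ2) • x := by
        rw [add_smul, smul_sub, smul_sub]; abel
      rw [e, hsum, one_smul]
    have key : (inner ℝ g (θ1 • y1 + θ2 • y2 - x) : ℝ)
        = θ1 * (inner ℝ g (y1 - x) : ℝ) + θ2 * (inner ℝ g (y2 - x) : ℝ) := by
      rw [hvec, inner_add_right, real_inner_smul_right, real_inner_smul_right]
    simp only [smul_eq_mul]
    rw [key]
    have m1 : θ1 * (a + (inner ℝ g (y1 - x) : ℝ)) ≤ θ1 * sSup (planeValues O M y1 x) :=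
      mul_le_mul_of_nonneg_left e1 hθ1
    have m2 : θ2 * (a + (inner ℝ g (y2 - x) : ℝ)) ≤ θ2 * sSup (planeValues O M y2 x) :=
      mul_le_mul_of_nonneg_left e2 hθ2
    have ha' : θ1 * a + θ2 * a = a := by rw [← add_mul, hsum, one_mul]
    nlinarith [m1, m2, ha']
  -- Part 4 (subgradient inclusion)
  have h4 : ∀ x, convexSubdiff (fun y => sSup (planeValues O M y x)) x ⊆ clarkeSubdiff f x := by
    intro x g hg d
    set t : ℕ → ℝ := fun j => 1 / (j + 1) with ht
    have htpos : ∀ j, 0 < t j := fun j => by positivity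
    have htlim : Tendsto t atTop (𝓝 0) := tendsto_one_div_add_atTop_nhds_zero_nat
    set y : ℕ → EuclideanSpace ℝ (Fin n) := fun j => x + t j • d with hy
    have hymx : ∀ j, y j - x = t j • d := fun j => add_sub_cancel_left x (t j • d)
    have hsel : ∀ j, ∃ z a gj, ‖z - x‖ ≤ M ∧ (a, gj) ∈ O z x ∧
        sSup (planeValues O M (y j) x) - t j * t j < a + (inner ℝ gj (y j - x) : ℝ) := by
      intro j
      have hlt : sSup (planeValues O M (y j) x) - t j * t j
          < sSup (planeValues O M (y j) x) := by nlinarith [htpos j]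
      obtain ⟨v, hv, hvlt⟩ := exists_lt_of_lt_csSup (h1 x (y j)).1 hlt
      obtain ⟨z, a, gj, hz, hm, rfl⟩ := hv
      exact ⟨z, a, gj, hz, hm, hvlt⟩
    choose z a gj hz hm hlt using hsel
    -- basic estimates
    have hale : ∀ j, a j ≤ f x := fun j => hO1a _ _ _ _ (hm j)
    have hsub : ∀ j, f x + t j * (inner ℝ g d : ℝ) ≤ sSup (planeValues O M (y j) x) := by
      intro j
      have := hg (y j)
      simp only [h3 x] at this
      rwa [hymx j, real_inner_smul_right] at this
    have hkey : ∀ j, f x + t j * (inner ℝ g d : ℝ) - t j * t j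
        < a j + t j * (inner ℝ (gj j) d : ℝ) := by
      intro j
      have := hlt j
      rw [hymx j, real_inner_smul_right] at this
      linarith [hsub j]
    -- inequality for inner ℝ products
    have hineq : ∀ j, (inner ℝ g d : ℝ) ≤ (inner ℝ (gj j) d : ℝ) + t j := by
      intro j
      have h0 : t j * (inner ℝ g d : ℝ) < t j * (inner ℝ (gj j) d : ℝ) + t j * t j := by
        have := hkey j; have := hale j; linarith
      have := (mul_lt_mul_iff_right₀ (htpos j)).mp (by linarith [h0] :
        t j * (inner ℝ g d : ℝ) < t j * ((inner ℝ (gj j) d : ℝ) + t j))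
      linarith
    -- compactness: extract a convergent subsequence of the gradients
    obtain ⟨r, hr⟩ := isBounded_iff_forall_norm_le.mp (hB x)
    have hgball : ∀ j, gj j ∈ closedBall (0 : EuclideanSpace ℝ (Fin n)) r := by
      intro j
      have h := hr _ (hmemB x (z j) (a j) (gj j) (hz j) (hm j))
      have : ‖gj j‖ ≤ r := le_trans (norm_snd_le ((a j, gj j) : ℝ × EuclideanSpace ℝ (Fin n))) h
      simpa [mem_closedBall, dist_eq_norm] using this
    obtain ⟨g', _, ψ, hψ, hgψ⟩ :=
      tendsto_subseq_of_bounded isBounded_closedBall hgball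
    have htψ : Tendsto (t ∘ ψ) atTop (𝓝 0) := htlim.comp hψ.tendsto_atTop
    have hinnerψ : Tendsto (fun k => (inner ℝ (gj (ψ k)) d : ℝ)) atTop (𝓝 (inner ℝ g' d : ℝ)) :=
      hgψ.inner tendsto_const_nhds
    -- a ∘ ψ → f x by squeeze
    have haψ : Tendsto (a ∘ ψ) atTop (𝓝 (f x)) := by
      have hlow' : ∀ k, f x + t (ψ k) * (inner ℝ g d : ℝ) - t (ψ k) * t (ψ k)
          - t (ψ k) * (inner ℝ (gj (ψ k)) d : ℝ) ≤ (a ∘ ψ) k := by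
        intro k
        have := hkey (ψ k)
        simp only [Function.comp]
        linarith
      have hliml : Tendsto (fun k => f x + t (ψ k) * (inner ℝ g d : ℝ) - t (ψ k) * t (ψ k)
          - t (ψ k) * (inner ℝ (gj (ψ k)) d : ℝ)) atTop (𝓝 (f x)) := by
        have : Tendsto (fun k => f x + t (ψ k) * (inner ℝ g d : ℝ) - t (ψ k) * t (ψ k)
            - t (ψ k) * (inner ℝ (gj (ψ k)) d : ℝ)) atTop
            (𝓝 (f x + 0 * (inner ℝ g d : ℝ) - 0 * 0 - 0 * (inner ℝ g' d : ℝ))) := by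
          exact ((tendsto_const_nhds.add (htψ.mul tendsto_const_nhds)).sub
            (htψ.mul htψ)).sub (htψ.mul hinnerψ)
        simpa using this
      exact tendsto_of_tendsto_of_tendsto_of_le_of_le hliml tendsto_const_nhds
        hlow' (fun k => hale (ψ k))
    -- apply axiom O2 along the subsequence
    have hg' : g' ∈ clarkeSubdiff f x :=
      hO2 x (z ∘ ψ) (a ∘ ψ) (gj ∘ ψ) g' (fun k => hm (ψ k)) haψ (fun k => hz (ψ k)) hgψ
    -- conclude
    have hfin : (inner ℝ g d : ℝ) ≤ (inner ℝ g' d : ℝ) := by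
      have : Tendsto (fun k => (inner ℝ (gj (ψ k)) d : ℝ) + t (ψ k)) atTop
          (𝓝 ((inner ℝ g' d : ℝ) + 0)) := hinnerψ.add htψ
      rw [add_zero] at this
      exact ge_of_tendsto' this (fun k => hineq (ψ k))
    exact hfin.trans (hg' d)
  exact ⟨h1, h2, h3, h4⟩
end
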